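/- arXiv:1403.4755 — 5 statements merged into one kernel-verified Lean document; each statement's English description precedes it below -/
import Mathlib

section
/- Let ρ₀, ρ₁ be Borel probability measures on H with Ent_γ(ρ₀) < ∞ and Ent_γ(ρ₁) < ∞. Suppose Π ∈ C(ρ₀,ρ₁) is a weak limit point, as ε → 0, of couplings Π_ε ∈ C(ρ₀,ρ₁), where each Π_ε minimizes Π ↦ ∫ c_ε(x−y) dΠ over C(ρ₀,ρ₁) and satisfies, for every t ∈ (0,1), Ent_γ(ρ_t^ε) ≤ (1−t)Ent_γ(ρ₀) + t Ent_γ(ρ₁) − (t(1−t)/(2(1+ε)²))(W_ε(ρ₀,ρ₁) − ε)², where ρ_t^ε := ((1−t)P₁ + tP₂)_#Π_ε. Then for every t ∈ (0,1), the measure ρ_t := ((1−t)P₁ + tP₂)_#Π satisfies Ent_γ(ρ_t) ≤ (1−t)Ent_γ(ρ₀) + t Ent_γ(ρ₁) − (t(1−t)/2) W₁(ρ₀,ρ₁)²; in particular ρ_t has finite relative entropy, hence ρ_t ≪ γ. -/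
open MeasureTheory ProbabilityTheory Filter Metric Set
open scoped ENNReal NNReal

section Defs

variable {E : Type*} [MeasurableSpace E]

open scoped Classical in
/-- Relative entropy of `ρ` with respect to `m`: `∫ (dρ/dm) log(dρ/dm) dm`
when `ρ ≪ m` and the integrand is integrable, `+∞` otherwise. -/
noncomputable def Ent (m ρ : Measure E) : EReal :=
  if ρ ≪ m ∧ Integrable (llr ρ m) ρ then ((∫ x, llr ρ m x ∂ρ : ℝ) : EReal) else ⊤

end Defs

section Hilbert

variable {H : Type*} [NormedAddCommGroup H] [InnerProductSpace ℝ H]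
  [MeasurableSpace H] [BorelSpace H]

/-- A centered Gaussian measure: every continuous linear functional pushes the measure
forward to a centered Gaussian measure on `ℝ`. -/
def IsCenteredGaussian (γ : Measure H) : Prop :=
  IsProbabilityMeasure γ ∧
    ∀ ℓ : H →L[ℝ] ℝ, ∃ v : ℝ≥0, Measure.map ℓ γ = gaussianReal 0 v

/-- The covariance operator of `γ` has the representation `R x = ∑ i, c i ⟪x, e i⟫ e i` for an
orthonormal system `e` (expressed via `⟪R u, v⟫`), with eigenvalue decay `c (i+1) ≤ c i / i ^ α`
for some `α > 5/2`. -/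
def TiserCondition (γ : Measure H) : Prop :=
  ∃ (a : ℝ) (c : ℕ → ℝ) (e : ℕ → H), 5 / 2 < a ∧ Orthonormal ℝ e ∧
    (∀ i : ℕ, c (i + 1) ≤ c i / (i + 1 : ℝ) ^ a) ∧
    ∀ u v : H, ∫ x, (inner ℝ x u : ℝ) * (inner ℝ x v : ℝ) ∂γ
      = ∑' i, c i * (inner ℝ u (e i) : ℝ) * (inner ℝ v (e i) : ℝ)

/-- The set of couplings between `ρ₀` and `ρ₁`. -/
def Coupling (ρ₀ ρ₁ : Measure H) : Set (Measure (H × H)) :=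
  {π | Measure.map Prod.fst π = ρ₀ ∧ Measure.map Prod.snd π = ρ₁}

/-- The transport cost `∫ |x - y| dπ`. -/
noncomputable def cost1 (π : Measure (H × H)) : ℝ≥0∞ :=
  ∫⁻ p, ENNReal.ofReal ‖p.1 - p.2‖ ∂π

/-- The strictly convex cost `α(z) = √(1 + |z|²)`. -/
noncomputable def alphaCost (z : H) : ℝ := Real.sqrt (1 + ‖z‖ ^ 2)

/-- The gradient of `α`, `∇α(z) = z / √(1 + |z|²)`. -/
noncomputable def gradAlpha (z : H) : H := (Real.sqrt (1 + ‖z‖ ^ 2))⁻¹ • z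

/-- The secondary transport cost `∫ α(x - y) dπ`. -/
noncomputable def cost2 (π : Measure (H × H)) : ℝ≥0∞ :=
  ∫⁻ p, ENNReal.ofReal (alphaCost (p.1 - p.2)) ∂π

/-- The perturbed cost `∫ (|x-y| + ε α(x-y)) dπ`. -/
noncomputable def costEps (ε : ℝ) (π : Measure (H × H)) : ℝ≥0∞ :=
  ∫⁻ p, ENNReal.ofReal (‖p.1 - p.2‖ + ε * alphaCost (p.1 - p.2)) ∂π

/-- The 1-Wasserstein distance. -/
noncomputable def W1 (ρ₀ ρ₁ : Measure H) : ℝ≥0∞ :=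
  ⨅ π ∈ Coupling ρ₀ ρ₁, cost1 π

/-- `W_ε(ρ₀,ρ₁) = inf ∫ c_ε(x-y) dπ` over couplings. -/
noncomputable def Weps (ε : ℝ) (ρ₀ ρ₁ : Measure H) : ℝ≥0∞ :=
  ⨅ π ∈ Coupling ρ₀ ρ₁, costEps ε π

/-- The set of optimal couplings for `∫ |x-y| dπ`. -/
def O1 (ρ₀ ρ₁ : Measure H) : Set (Measure (H × H)) :=
  {π ∈ Coupling ρ₀ ρ₁ | ∀ π' ∈ Coupling ρ₀ ρ₁, cost1 π ≤ cost1 π'}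

/-- The set of optimal couplings of the second variational problem. -/
def O2 (ρ₀ ρ₁ : Measure H) : Set (Measure (H × H)) :=
  {π ∈ O1 ρ₀ ρ₁ | ∀ π' ∈ O1 ρ₀ ρ₁, cost2 π ≤ cost2 π'}

/-- The displacement interpolation `ρ_t = ((1-t) P₁ + t P₂)_# π`. -/
noncomputable def interp (t : ℝ) (π : Measure (H × H)) : Measure H :=
  Measure.map (fun p : H × H => (1 - t) • p.1 + t • p.2) π

/-- `π` enjoys the convexity property: the relative entropy is `1`-convex along
`t ↦ ((1-t)P₁ + tP₂)_#π`. -/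
def ConvexityProperty (γ ρ₀ ρ₁ : Measure H) (π : Measure (H × H)) : Prop :=
  ∀ t ∈ Set.Ioo (0 : ℝ) 1,
    Ent γ (interp t π) ≤ ((1 - t : ℝ) : EReal) * Ent γ ρ₀ + ((t : ℝ) : EReal) * Ent γ ρ₁
      - ((ENNReal.ofReal (t * (1 - t) / 2) * (W1 ρ₀ ρ₁ * W1 ρ₀ ρ₁) : ℝ≥0∞) : EReal)

/-- `O̅₂(ρ₀,ρ₁)`: elements of `O₂(ρ₀,ρ₁)` enjoying the convexity property. -/
def O2bar (γ ρ₀ ρ₁ : Measure H) : Set (Measure (H × H)) :=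
  {π ∈ O2 ρ₀ ρ₁ | ConvexityProperty γ ρ₀ ρ₁ π}

/-- `x` is a Lebesgue point of `f` w.r.t. `γ`. -/
def IsLebesguePoint (γ : Measure H) (f : H → ℝ) (x : H) : Prop :=
  Tendsto (fun r : ℝ => (∫ y in ball x r, |f y - f x| ∂γ) / (γ (ball x r)).toReal)
    (nhdsWithin 0 (Set.Ioi 0)) (nhds 0)

/-- Weak convergence of a sequence of measures (against bounded continuous functions). -/
def WeakLimit {X : Type*} [MeasurableSpace X] [TopologicalSpace X]
    (μs : ℕ → Measure X) (μ : Measure X) : Prop :=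
  ∀ f : BoundedContinuousFunction X ℝ,
    Tendsto (fun n => ∫ x, f x ∂(μs n)) atTop (nhds (∫ x, f x ∂μ))

end Hilbert

variable {H : Type*} [NormedAddCommGroup H] [InnerProductSpace ℝ H] [CompleteSpace H]
  [TopologicalSpace.SeparableSpace H] [MeasurableSpace H] [BorelSpace H]


section DV
open Real
variable {X : Type*} [MeasurableSpace X]

lemma Ent_ne_bot (m ρ : Measure X) : Ent m ρ ≠ ⊥ := by
  unfold Ent
  split
  · exact EReal.coe_ne_bot _
  · exact bot_lt_top.ne'

lemma Ent_eq_of_lt_top {m ρ : Measure X} (h : Ent m ρ < ⊤) :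
    ρ ≪ m ∧ Integrable (llr ρ m) ρ ∧ Ent m ρ = ((∫ x, llr ρ m x ∂ρ : ℝ) : EReal) := by
  by_cases hc : ρ ≪ m ∧ Integrable (llr ρ m) ρ
  · exact ⟨hc.1, hc.2, by rw [Ent, if_pos hc]⟩
  · rw [Ent, if_neg hc] at h
    exact absurd h (lt_irrefl _)

lemma integrable_of_bounded {μ : Measure X} [IsFiniteMeasure μ] {f : X → ℝ}
    (hf : AEStronglyMeasurable f μ) {B : ℝ} (hB : ∀ x, |f x| ≤ B) : Integrable f μ :=
  Integrable.mono' (integrable_const B) hf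
    (Filter.Eventually.of_forall fun x => by simpa [Real.norm_eq_abs] using hB x)

lemma exp_integral_pos {γ : Measure X} [IsProbabilityMeasure γ] {f : X → ℝ}
    (hf : Measurable f) {B : ℝ} (hB : ∀ x, |f x| ≤ B) :
    Real.exp (-B) ≤ ∫ x, Real.exp (f x) ∂γ := by
  have hint : Integrable (fun x => Real.exp (f x)) γ :=
    integrable_of_bounded hf.exp.aestronglyMeasurable (B := Real.exp B) (fun x => by
      rw [abs_of_pos (Real.exp_pos _)]
      exact Real.exp_le_exp.2 (abs_le.1 (hB x)).2)
  calc Real.exp (-B) = ∫ _x, Real.exp (-B) ∂γ := by simp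
    _ ≤ ∫ x, Real.exp (f x) ∂γ :=
      integral_mono (integrable_const _) hint fun x => Real.exp_le_exp.2 (abs_le.1 (hB x)).1

lemma integrable_exp_of_bounded {γ : Measure X} [IsFiniteMeasure γ] {f : X → ℝ}
    (hf : Measurable f) {B : ℝ} (hB : ∀ x, |f x| ≤ B) :
    Integrable (fun x => Real.exp (f x)) γ :=
  integrable_of_bounded hf.exp.aestronglyMeasurable (B := Real.exp B) (fun x => by
    rw [abs_of_pos (Real.exp_pos _)]
    exact Real.exp_le_exp.2 (abs_le.1 (hB x)).2)

lemma dv_le {ρ γ : Measure X} [IsProbabilityMeasure ρ] [IsProbabilityMeasure γ]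
    (hac : ρ ≪ γ) (hint : Integrable (llr ρ γ) ρ)
    {f : X → ℝ} (hf : Measurable f) {B : ℝ} (hB : ∀ x, |f x| ≤ B) :
    ∫ x, f x ∂ρ ≤ (∫ x, llr ρ γ x ∂ρ) + Real.log (∫ x, Real.exp (f x) ∂γ) := by
  set M := ∫ x, Real.exp (f x) ∂γ with hM
  have hMpos : 0 < M := lt_of_lt_of_le (Real.exp_pos _) (exp_integral_pos hf hB)
  set u : X → ℝ := fun x => f x - llr ρ γ x - Real.log M with hu
  have humeas : Measurable u := (hf.sub (measurable_llr _ _)).sub measurable_const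
  have hfint : Integrable f ρ := integrable_of_bounded hf.aestronglyMeasurable hB
  have huint : Integrable u ρ := (hfint.sub hint).sub (integrable_const _)
  -- rewrite ofReal (exp u) a.e.
  have hexp_eq : (fun x => ENNReal.ofReal (Real.exp (u x))) =ᵐ[ρ]
      fun x => γ.rnDeriv ρ x * ENNReal.ofReal (Real.exp (f x) / M) := by
    filter_upwards [exp_neg_llr hac, Measure.rnDeriv_lt_top γ ρ] with x hx hlt
    have : Real.exp (u x) = (γ.rnDeriv ρ x).toReal * (Real.exp (f x) / M) := by
      rw [hu]
      simp only [sub_eq_add_neg, Real.exp_add]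
      rw [← hx]
      rw [Real.exp_neg (Real.log M), Real.exp_log hMpos]
      ring
    rw [this, ENNReal.ofReal_mul ENNReal.toReal_nonneg, ENNReal.ofReal_toReal hlt.ne]
  -- lintegral bound
  have hkey : ∫⁻ x, ENNReal.ofReal (Real.exp (f x) / M) ∂γ = 1 := by
    have h1 : ∀ x, ENNReal.ofReal (Real.exp (f x) / M)
        = ENNReal.ofReal (Real.exp (f x)) * ENNReal.ofReal M⁻¹ := by
      intro x
      rw [div_eq_mul_inv, ENNReal.ofReal_mul (Real.exp_pos _).le]
    simp_rw [h1]
    rw [lintegral_mul_const _ (by measurability)]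
    have h2 : ∫⁻ x, ENNReal.ofReal (Real.exp (f x)) ∂γ = ENNReal.ofReal M := by
      rw [← ofReal_integral_eq_lintegral_ofReal (integrable_exp_of_bounded hf hB)
        (Filter.Eventually.of_forall fun x => (Real.exp_pos _).le)]
    rw [h2, ENNReal.ofReal_inv_of_pos hMpos, ENNReal.mul_inv_cancel
      (by simp [ENNReal.ofReal_eq_zero, not_le, hMpos]) ENNReal.ofReal_ne_top]
  have hlin : ∫⁻ x, ENNReal.ofReal (Real.exp (u x)) ∂ρ ≤ 1 := by
    rw [lintegral_congr_ae hexp_eq]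
    calc ∫⁻ x, γ.rnDeriv ρ x * ENNReal.ofReal (Real.exp (f x) / M) ∂ρ
        = ∫⁻ x, ENNReal.ofReal (Real.exp (f x) / M) ∂(ρ.withDensity (γ.rnDeriv ρ)) := by
          rw [lintegral_withDensity_eq_lintegral_mul _ (Measure.measurable_rnDeriv _ _)
            (by measurability)]
          rfl
      _ ≤ ∫⁻ x, ENNReal.ofReal (Real.exp (f x) / M) ∂γ :=
          lintegral_mono' (Measure.withDensity_rnDeriv_le _ _) le_rfl
      _ = 1 := hkey
  have hexpint : Integrable (fun x => Real.exp (u x)) ρ := by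
    refine ⟨humeas.exp.aestronglyMeasurable, ?_⟩
    rw [hasFiniteIntegral_iff_ofReal (Filter.Eventually.of_forall fun x => (Real.exp_pos _).le)]
    exact lt_of_le_of_lt hlin ENNReal.one_lt_top
  have hIu : ∫ x, Real.exp (u x) ∂ρ ≤ 1 := by
    rw [integral_eq_lintegral_of_nonneg_ae (Filter.Eventually.of_forall fun x => (Real.exp_pos _).le)
      humeas.exp.aestronglyMeasurable]
    calc (∫⁻ x, ENNReal.ofReal (Real.exp (u x)) ∂ρ).toReal ≤ (1 : ℝ≥0∞).toReal :=
          ENNReal.toReal_mono ENNReal.one_ne_top hlin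
      _ = 1 := by simp
  have hle : ∫ x, u x ∂ρ ≤ 0 := by
    have h1 : ∫ x, u x ∂ρ ≤ ∫ x, (Real.exp (u x) - 1) ∂ρ :=
      integral_mono huint (hexpint.sub (integrable_const 1)) fun x => by
        have := Real.add_one_le_exp (u x); linarith
    rw [integral_sub hexpint (integrable_const 1)] at h1
    simp only [integral_const, measure_univ, Measure.real, ENNReal.toReal_one, smul_eq_mul, one_mul] at h1
    linarith
  have : ∫ x, u x ∂ρ = ∫ x, f x ∂ρ - ∫ x, llr ρ γ x ∂ρ - Real.log M := by
    have e1 : ∫ x, (f x - llr ρ γ x - Real.log M) ∂ρ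
        = ∫ x, (f x - llr ρ γ x) ∂ρ - ∫ _x, Real.log M ∂ρ :=
      integral_sub (hfint.sub hint) (integrable_const _)
    rw [hu]
    rw [e1, integral_sub hfint hint]
    simp [measure_univ]
  linarith [hle, this]
end DV

section DVTop
open Real
variable {X : Type*} [MeasurableSpace X] [TopologicalSpace X]
  [TopologicalSpace.PseudoMetrizableSpace X] [NormalSpace X] [BorelSpace X]

lemma dv_extend {ρ γ : Measure X} [IsProbabilityMeasure ρ] [IsProbabilityMeasure γ]
    {c : ℝ} (hc : ∀ f : BoundedContinuousFunction X ℝ, ∫ x, f x ∂ρ ≤ c + Real.log (∫ x, Real.exp (f x) ∂γ))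
    {f : X → ℝ} (hf : Measurable f) {B : ℝ} (hB0 : 0 ≤ B) (hB : ∀ x, |f x| ≤ B) :
    ∫ x, f x ∂ρ ≤ c + Real.log (∫ x, Real.exp (f x) ∂γ) := by
  set μ : Measure X := ρ + γ with hμ
  have hρμ : ρ ≪ μ := Measure.absolutelyContinuous_of_le (Measure.le_add_right le_rfl)
  have hfμ : Integrable f μ := integrable_of_bounded hf.aestronglyMeasurable hB
  have hex : ∀ k : ℕ, ∃ g : BoundedContinuousFunction X ℝ, (∫⁻ x, ‖f x - g x‖₊ ∂μ) ≤ (2 : ℝ≥0∞)⁻¹ ^ k := by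
    intro k
    obtain ⟨g, hg, -⟩ := hfμ.exists_boundedContinuous_lintegral_sub_le
      (ε := (2 : ℝ≥0∞)⁻¹ ^ k) (pow_ne_zero k (by norm_num))
    exact ⟨g, hg⟩
  choose g hg using hex
  set cl : ℝ → ℝ := fun y => max (min B y) (-B) with hcl
  have hclcont : Continuous cl := (continuous_const.min continuous_id).max continuous_const
  have hclbd : ∀ y, |cl y| ≤ B := by
    intro y
    rw [abs_le]
    exact ⟨le_max_right _ _, max_le ((min_le_left _ _)) (by linarith)⟩
  have hcl_lip : ∀ a b, |cl a - cl b| ≤ |a - b| := by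
    intro a b
    refine (abs_max_sub_max_le_abs _ _ _).trans ?_
    have := abs_min_sub_min_le_max B a B b
    simpa using this
  have hclf : ∀ x, cl (f x) = f x := by
    intro x
    have h1 := abs_le.1 (hB x)
    rw [hcl]
    simp only [min_eq_right h1.2, max_eq_left h1.1]
  set gB : ℕ → BoundedContinuousFunction X ℝ := fun k =>
    BoundedContinuousFunction.ofNormedAddCommGroup (fun x => cl (g k x))
      (hclcont.comp (g k).continuous) B
      (fun x => by simpa [Real.norm_eq_abs] using hclbd (g k x)) with hgB
  have hgBapp : ∀ k x, gB k x = cl (g k x) := fun k x => rfl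
  have hgBle : ∀ k, (∫⁻ x, ‖f x - gB k x‖₊ ∂μ) ≤ (2 : ℝ≥0∞)⁻¹ ^ k := by
    intro k
    refine le_trans (lintegral_mono fun x => ?_) (hg k)
    rw [← enorm_eq_nnnorm, ← enorm_eq_nnnorm, Real.enorm_eq_ofReal_abs, Real.enorm_eq_ofReal_abs]
    apply ENNReal.ofReal_le_ofReal
    calc |f x - gB k x| = |cl (f x) - cl (g k x)| := by rw [hgBapp, hclf]
      _ ≤ |f x - g k x| := hcl_lip _ _
  have hsum : ∫⁻ x, ∑' k, (‖f x - gB k x‖₊ : ℝ≥0∞) ∂μ < ⊤ := by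
    rw [lintegral_tsum (f := fun k x => (‖f x - gB k x‖₊ : ℝ≥0∞)) (fun k => ((hf.sub (gB k).continuous.measurable).nnnorm.coe_nnreal_ennreal : Measurable fun x => (‖f x - gB k x‖₊ : ℝ≥0∞)).aemeasurable)]
    refine lt_of_le_of_lt (ENNReal.tsum_le_tsum hgBle) ?_
    rw [ENNReal.tsum_geometric]
    rw [ENNReal.one_sub_inv_two, inv_inv]
    exact ENNReal.ofNat_lt_top
  have hae_mu : ∀ᵐ x ∂μ, Tendsto (fun k => gB k x) atTop (nhds (f x)) := by
    have hmeas : Measurable fun x => ∑' k, (‖f x - gB k x‖₊ : ℝ≥0∞) :=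
      Measurable.ennreal_tsum (fun k => (hf.sub (gB k).continuous.measurable).enorm)
    filter_upwards [ae_lt_top hmeas hsum.ne] with x hx
    have h0 : Tendsto (fun k => (‖f x - gB k x‖₊ : ℝ≥0∞)) atTop (nhds 0) :=
      ENNReal.tendsto_atTop_zero_of_tsum_ne_top hx.ne
    have h1 : Tendsto (fun k => ‖f x - gB k x‖) atTop (nhds 0) := by
      have h2 : Tendsto (fun k => (‖f x - gB k x‖₊ : ℝ≥0)) atTop (nhds 0) := by
        rw [← ENNReal.tendsto_coe (f := atTop) (m := fun k => (‖f x - gB k x‖₊ : ℝ≥0))]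
        simpa using h0
      have := (NNReal.tendsto_coe (f := atTop)).2 h2
      simpa [coe_nnnorm] using this
    rw [tendsto_iff_norm_sub_tendsto_zero]
    simpa [norm_sub_rev] using h1
  have hae_ρ : ∀ᵐ x ∂ρ, Tendsto (fun k => gB k x) atTop (nhds (f x)) :=
    hae_mu.filter_mono hρμ.ae_le
  have hae_γ : ∀ᵐ x ∂γ, Tendsto (fun k => gB k x) atTop (nhds (f x)) :=
    hae_mu.filter_mono (Measure.absolutelyContinuous_of_le (Measure.le_add_left le_rfl)).ae_le
  have hρ_tendsto : Tendsto (fun k => ∫ x, gB k x ∂ρ) atTop (nhds (∫ x, f x ∂ρ)) := by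
    refine tendsto_integral_of_dominated_convergence (fun _ => B)
      (fun k => (gB k).continuous.measurable.aestronglyMeasurable) (integrable_const B)
      (fun k => Filter.Eventually.of_forall fun x => ?_) hae_ρ
    simpa [Real.norm_eq_abs, hgBapp] using hclbd (g k x)
  have hexp_tendsto : Tendsto (fun k => ∫ x, Real.exp (gB k x) ∂γ) atTop
      (nhds (∫ x, Real.exp (f x) ∂γ)) := by
    refine tendsto_integral_of_dominated_convergence (fun _ => Real.exp B)
      (fun k => ((gB k).continuous.rexp).measurable.aestronglyMeasurable) (integrable_const _)
      (fun k => Filter.Eventually.of_forall fun x => ?_)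
      (hae_γ.mono fun x hx => (Real.continuous_exp.tendsto _).comp hx)
    rw [Real.norm_eq_abs, abs_of_pos (Real.exp_pos _)]
    exact Real.exp_le_exp.2 (abs_le.1 (hclbd (g k x))).2
  have hL : 0 < ∫ x, Real.exp (f x) ∂γ :=
    lt_of_lt_of_le (Real.exp_pos _) (exp_integral_pos hf hB)
  have hlog : Tendsto (fun k => c + Real.log (∫ x, Real.exp (gB k x) ∂γ)) atTop
      (nhds (c + Real.log (∫ x, Real.exp (f x) ∂γ))) :=
    tendsto_const_nhds.add (((Real.continuousAt_log hL.ne').tendsto).comp hexp_tendsto)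
  exact le_of_tendsto_of_tendsto' hρ_tendsto hlog (fun k => hc (gB k))

lemma dv_hard {ρ γ : Measure X} [IsProbabilityMeasure ρ] [IsProbabilityMeasure γ] {c : ℝ}
    (hc : ∀ f : BoundedContinuousFunction X ℝ,
      ∫ x, f x ∂ρ ≤ c + Real.log (∫ x, Real.exp (f x) ∂γ)) :
    ρ ≪ γ ∧ Integrable (llr ρ γ) ρ ∧ ∫ x, llr ρ γ x ∂ρ ≤ c := by
  have hext : ∀ (f : X → ℝ) (B : ℝ), Measurable f → 0 ≤ B → (∀ x, |f x| ≤ B) →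
      ∫ x, f x ∂ρ ≤ c + Real.log (∫ x, Real.exp (f x) ∂γ) :=
    fun f B hf hB0 hB => dv_extend hc hf hB0 hB
  -- Step 1 : absolute continuity
  have hac : ρ ≪ γ := by
    intro s hs
    set A := toMeasurable γ s with hA
    have hAm : MeasurableSet A := measurableSet_toMeasurable γ s
    have hAγ : γ A = 0 := by rw [hA, measure_toMeasurable]; exact hs
    have key : ∀ n : ℕ, (ρ A).toReal * (n : ℝ) ≤ c := by
      intro n
      have hfm : Measurable (A.indicator (fun _ => (n : ℝ))) := measurable_const.indicator hAm
      have hB : ∀ x, |A.indicator (fun _ => (n : ℝ)) x| ≤ (n : ℝ) := fun x => by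
        by_cases hx : x ∈ A <;> simp [Set.indicator_apply, hx]
      have h1 := hext _ _ hfm (Nat.cast_nonneg n) hB
      rw [integral_indicator_const _ hAm] at h1
      have h2 : ∫ x, Real.exp (A.indicator (fun _ => (n : ℝ)) x) ∂γ = 1 := by
        have he : (fun x => Real.exp (A.indicator (fun _ => (n : ℝ)) x)) =ᵐ[γ]
            fun _ => (1 : ℝ) := by
          filter_upwards [measure_eq_zero_iff_ae_notMem.1 hAγ] with x hx
          simp [Set.indicator_of_notMem hx]
        rw [integral_congr_ae he]
        simp
      rw [h2, Real.log_one, add_zero] at h1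
      exact h1
    have h0 : (ρ A).toReal = 0 := by
      by_contra hne
      have hpos : 0 < (ρ A).toReal := lt_of_le_of_ne ENNReal.toReal_nonneg (Ne.symm hne)
      obtain ⟨n, hn⟩ := exists_nat_gt (c / (ρ A).toReal)
      rw [div_lt_iff₀ hpos] at hn
      have := key n
      nlinarith
    have hA0 : ρ A = 0 :=
      ((ENNReal.toReal_eq_zero_iff _).1 h0).resolve_right (measure_ne_top ρ A)
    exact measure_mono_null (subset_toMeasurable γ s) hA0
  -- notation
  set h : X → ℝ≥0∞ := ρ.rnDeriv γ with hh
  have hhm : Measurable h := Measure.measurable_rnDeriv ρ γ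
  have hset : MeasurableSet {x | (h x).toReal = 0} :=
    hhm.ennreal_toReal (measurableSet_singleton 0)
  set g : ℕ → X → ℝ := fun n x =>
    if (h x).toReal = 0 then -(n : ℝ) else max (-(n : ℝ)) (min (n : ℝ) (llr ρ γ x)) with hgdef
  have hgm : ∀ n, Measurable (g n) := fun n =>
    Measurable.ite hset measurable_const
      (measurable_const.max (measurable_const.min (measurable_llr _ _)))
  have hgB : ∀ n x, |g n x| ≤ (n : ℝ) := by
    intro n x
    simp only [hgdef]
    by_cases hx : (h x).toReal = 0
    · simp [hx]
    · rw [if_neg hx, abs_le]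
      constructor
      · exact le_max_left _ _
      · exact max_le (by simp) ((min_le_left _ _))
  have hllr : ∀ x, llr ρ γ x = Real.log (h x).toReal := fun x => rfl
  -- γ-a.e. domination
  have hdom : ∀ᵐ x ∂γ, ∀ n : ℕ, Real.exp (g n x) ≤ (h x).toReal + 1 := by
    refine Filter.Eventually.of_forall fun x n => ?_
    simp only [hgdef]
    by_cases hx : (h x).toReal = 0
    · rw [if_pos hx]
      have : Real.exp (-(n : ℝ)) ≤ 1 := Real.exp_le_one_iff.2 (by simp)
      have h0 : (0 : ℝ) ≤ (h x).toReal := ENNReal.toReal_nonneg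
      linarith
    · rw [if_neg hx]
      have ht : 0 < (h x).toReal := lt_of_le_of_ne ENNReal.toReal_nonneg (Ne.symm hx)
      have h1 : max (-(n : ℝ)) (min (n : ℝ) (llr ρ γ x)) ≤ max 0 (llr ρ γ x) :=
        max_le_max (by simp) (min_le_right _ _)
      calc Real.exp (max (-(n : ℝ)) (min (n : ℝ) (llr ρ γ x)))
          ≤ Real.exp (max 0 (llr ρ γ x)) := Real.exp_le_exp.2 h1
        _ = max 1 (h x).toReal := by
            rw [Real.exp_monotone.map_max, Real.exp_zero, hllr, Real.exp_log ht]
        _ ≤ (h x).toReal + 1 := by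
            rcases le_total 1 (h x).toReal with hle | hle
            · rw [max_eq_right hle]; linarith
            · rw [max_eq_left hle]; linarith
  -- γ-a.e. convergence of exp (g n)
  have htend_γ : ∀ᵐ x ∂γ, Tendsto (fun n => Real.exp (g n x)) atTop (nhds (h x).toReal) := by
    filter_upwards [Measure.rnDeriv_lt_top ρ γ] with x hxlt
    by_cases hx : (h x).toReal = 0
    · have hgx : ∀ n : ℕ, g n x = -(n : ℝ) := fun n => by simp only [hgdef]; rw [if_pos hx]
      simp_rw [hgx, hx]
      have h1 : Tendsto (fun y : ℝ => Real.exp (-y)) atTop (nhds 0) :=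
        Real.tendsto_exp_neg_atTop_nhds_zero
      exact h1.comp tendsto_natCast_atTop_atTop
    · have ht : 0 < (h x).toReal := lt_of_le_of_ne ENNReal.toReal_nonneg (Ne.symm hx)
      have hev : (fun n : ℕ => Real.exp (g n x)) =ᶠ[atTop] fun _ => (h x).toReal := by
        obtain ⟨N, hN⟩ := exists_nat_ge |llr ρ γ x|
        refine Filter.eventually_atTop.2 ⟨N, fun n hn => ?_⟩
        have habs : |llr ρ γ x| ≤ (n : ℝ) := hN.trans (by exact_mod_cast hn)
        have h1 : g n x = llr ρ γ x := by
          simp only [hgdef, if_neg hx]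
          rw [min_eq_right (abs_le.1 habs).2, max_eq_right (abs_le.1 habs).1]
        show Real.exp (g n x) = (h x).toReal
        rw [h1, hllr, Real.exp_log ht]
      exact Tendsto.congr' hev.symm tendsto_const_nhds
  have hint_h : Integrable (fun x => (h x).toReal) γ := Measure.integrable_toReal_rnDeriv
  have hexpint_g : ∀ n : ℕ, Integrable (fun x => Real.exp (g n x)) γ := fun n =>
    integrable_exp_of_bounded (hgm n) (hgB n)
  have hexp_tendsto : Tendsto (fun n => ∫ x, Real.exp (g n x) ∂γ) atTop (nhds 1) := by
    have h1 : Tendsto (fun n => ∫ x, Real.exp (g n x) ∂γ) atTop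
        (nhds (∫ x, (h x).toReal ∂γ)) := by
      refine tendsto_integral_of_dominated_convergence (fun x => (h x).toReal + 1)
        (fun n => (hgm n).exp.aestronglyMeasurable) (hint_h.add (integrable_const 1))
        (fun n => ?_) htend_γ
      filter_upwards [hdom] with x hx
      rw [Real.norm_eq_abs, abs_of_pos (Real.exp_pos _)]
      exact hx n
    have h2 : ∫ x, (h x).toReal ∂γ = 1 := by
      rw [hh, Measure.integral_toReal_rnDeriv hac]
      simp
    rwa [h2] at h1
  have hexp_le_two : ∀ n : ℕ, ∫ x, Real.exp (g n x) ∂γ ≤ 2 := by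
    intro n
    have := integral_mono_ae (g := fun x => (h x).toReal + 1) (hexpint_g n)
      (hint_h.add (integrable_const 1)) (hdom.mono fun x hx => hx n)
    rw [integral_add hint_h (integrable_const 1)] at this
    have h2 : ∫ x, (h x).toReal ∂γ = 1 := by
      rw [hh, Measure.integral_toReal_rnDeriv hac]; simp
    have hconst : ∫ _x : X, (1 : ℝ) ∂γ = 1 := by simp
    rw [h2, hconst] at this
    linarith
  -- real bound on truncated integrals
  have hgn_int_le : ∀ n : ℕ, ∫ x, g n x ∂ρ ≤ c + 1 := by
    intro n
    have h1 := hext (g n) n (hgm n) (Nat.cast_nonneg n) (hgB n)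
    have h2 : Real.log (∫ x, Real.exp (g n x) ∂γ) ≤ 1 := by
      have hpos : (0 : ℝ) < 2 := by norm_num
      calc Real.log (∫ x, Real.exp (g n x) ∂γ) ≤ Real.log 2 :=
            Real.log_le_log (lt_of_lt_of_le (Real.exp_pos _)
              (exp_integral_pos (hgm n) (hgB n))) (hexp_le_two n)
        _ ≤ 1 := by
            have := Real.log_le_sub_one_of_pos hpos
            linarith
    linarith
  -- ρ-a.e. facts
  have hρae : ∀ᵐ x ∂ρ, 0 < (h x).toReal := by
    filter_upwards [Measure.rnDeriv_pos hac, hac.ae_le (Measure.rnDeriv_lt_top ρ γ)]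
      with x hpos hlt
    exact ENNReal.toReal_pos hpos.ne' hlt.ne
  have hgan : ∀ᵐ x ∂ρ, ∀ n : ℕ, g n x = max (-(n : ℝ)) (min (n : ℝ) (llr ρ γ x)) := by
    filter_upwards [hρae] with x hx n
    simp only [hgdef, if_neg hx.ne']
  -- negative part control
  have hneg : ∫⁻ x, ENNReal.ofReal (-llr ρ γ x) ∂ρ ≤ 1 := by
    have hmeas : AEMeasurable (fun x => ENNReal.ofReal (-llr ρ γ x)) γ :=
      ((measurable_llr ρ γ).neg.ennreal_ofReal).aemeasurable
    rw [← MeasureTheory.lintegral_rnDeriv_mul hac hmeas]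
    calc ∫⁻ x, h x * ENNReal.ofReal (-llr ρ γ x) ∂γ ≤ ∫⁻ _x, 1 ∂γ := by
          refine lintegral_mono_ae ?_
          filter_upwards [Measure.rnDeriv_lt_top ρ γ] with x hlt
          by_cases hx : h x = 0
          · simp [hx]
          · have ht : 0 < (h x).toReal := ENNReal.toReal_pos hx hlt.ne
            have hxe : h x = ENNReal.ofReal (h x).toReal := (ENNReal.ofReal_toReal hlt.ne).symm
            rw [hxe, ← ENNReal.ofReal_mul ENNReal.toReal_nonneg]
            refine ENNReal.ofReal_le_ofReal ?_ |>.trans (by norm_num : ENNReal.ofReal 1 ≤ 1)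
            have hlog : -llr ρ γ x ≤ ((h x).toReal)⁻¹ - 1 := by
              have := Real.log_le_sub_one_of_pos (inv_pos.2 ht)
              rw [Real.log_inv] at this
              rw [hllr]
              linarith
            have h2 : (h x).toReal * (-llr ρ γ x) ≤ (h x).toReal * (((h x).toReal)⁻¹ - 1) :=
              mul_le_mul_of_nonneg_left hlog ENNReal.toReal_nonneg
            have h3 : (h x).toReal * (((h x).toReal)⁻¹ - 1) = 1 - (h x).toReal := by
              field_simp
            nlinarith
      _ = 1 := by simp
  -- positive part control
  have hFae : ∀ᵐ x ∂ρ, ∀ n : ℕ,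
      ENNReal.ofReal (g n x) = ENNReal.ofReal (min (n : ℝ) (llr ρ γ x)) := by
    filter_upwards [hgan] with x hx n
    rw [hx n]
    rcases le_total 0 (llr ρ γ x) with hl | hl
    · have : (0 : ℝ) ≤ min (n : ℝ) (llr ρ γ x) := le_min (Nat.cast_nonneg n) hl
      rw [max_eq_right (le_trans (by simp) this)]
    · have hmin : min (n : ℝ) (llr ρ γ x) = llr ρ γ x := min_eq_right (hl.trans (Nat.cast_nonneg n))
      rw [hmin]
      rcases le_total (-(n : ℝ)) (llr ρ γ x) with h2 | h2
      · rw [max_eq_right h2]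
      · rw [max_eq_left h2, ENNReal.ofReal_eq_zero.2 (by simp), ENNReal.ofReal_eq_zero.2 hl]
  have hnegg : ∀ᵐ x ∂ρ, ∀ n : ℕ,
      ENNReal.ofReal (-g n x) ≤ ENNReal.ofReal (-llr ρ γ x) := by
    filter_upwards [hgan] with x hx n
    rcases le_total 0 (llr ρ γ x) with hl | hl
    · have : (0 : ℝ) ≤ min (n : ℝ) (llr ρ γ x) := le_min (Nat.cast_nonneg n) hl
      have h2 : 0 ≤ g n x := (hx n) ▸ le_trans this (le_max_right _ _)
      rw [ENNReal.ofReal_eq_zero.2 (by linarith)]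
      exact zero_le
    · have hmin : min (n : ℝ) (llr ρ γ x) = llr ρ γ x := min_eq_right (hl.trans (Nat.cast_nonneg n))
      have h2 : llr ρ γ x ≤ g n x := by rw [hx n, hmin]; exact le_max_right _ _
      exact ENNReal.ofReal_le_ofReal (by linarith)
  have htrunc_le : ∀ n : ℕ, ∫⁻ x, ENNReal.ofReal (min (n : ℝ) (llr ρ γ x)) ∂ρ
      ≤ ENNReal.ofReal (c + 2) := by
    intro n
    have hgint : Integrable (g n) ρ := integrable_of_bounded (hgm n).aestronglyMeasurable (hgB n)
    have hdecomp := integral_eq_lintegral_pos_part_sub_lintegral_neg_part hgint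
    set p := ∫⁻ x, ENNReal.ofReal (g n x) ∂ρ with hp
    set q := ∫⁻ x, ENNReal.ofReal (-g n x) ∂ρ with hq
    have hpfin : p ≠ ⊤ := by
      refine ne_top_of_le_ne_top ?_ (lintegral_mono (fun x => ENNReal.ofReal_le_ofReal
        (le_trans (le_abs_self _) (hgB n x))))
      simp [lintegral_const]
    have hqle : q ≤ 1 := le_trans (lintegral_mono_ae (hnegg.mono fun x hx => hx n)) hneg
    have hqfin : q ≠ ⊤ := ne_top_of_le_ne_top ENNReal.one_ne_top hqle
    have hq1 : q.toReal ≤ 1 := by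
      have := ENNReal.toReal_mono ENNReal.one_ne_top hqle
      simpa using this
    have hple : p.toReal ≤ c + 2 := by
      have h1 : p.toReal = ∫ x, g n x ∂ρ + q.toReal := by rw [hdecomp]; ring
      have := hgn_int_le n
      linarith
    have : p ≤ ENNReal.ofReal (c + 2) := by
      rw [← ENNReal.ofReal_toReal hpfin]
      exact ENNReal.ofReal_le_ofReal hple
    refine le_trans (le_of_eq ?_) this
    exact (lintegral_congr_ae (hFae.mono fun x hx => (hx n).symm))
  have hpos_fin : ∫⁻ x, ENNReal.ofReal (llr ρ γ x) ∂ρ ≤ ENNReal.ofReal (c + 2) := by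
    have hmono : Monotone fun (n : ℕ) (x : X) => ENNReal.ofReal (min (n : ℝ) (llr ρ γ x)) := by
      intro n m hnm x
      exact ENNReal.ofReal_le_ofReal (min_le_min (by exact_mod_cast hnm) le_rfl)
    have hsup : ∀ x, ⨆ n : ℕ, ENNReal.ofReal (min (n : ℝ) (llr ρ γ x))
        = ENNReal.ofReal (llr ρ γ x) := by
      intro x
      refine le_antisymm (iSup_le fun n => ENNReal.ofReal_le_ofReal (min_le_right _ _)) ?_
      obtain ⟨n, hn⟩ := exists_nat_ge (llr ρ γ x)
      refine le_trans (le_of_eq ?_) (le_iSup _ n)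
      rw [min_eq_right hn]
    have hlsup := lintegral_iSup (μ := ρ)
      (fun n => (measurable_const.min (measurable_llr ρ γ)).ennreal_ofReal) hmono
    calc ∫⁻ x, ENNReal.ofReal (llr ρ γ x) ∂ρ
        = ∫⁻ x, ⨆ n : ℕ, ENNReal.ofReal (min (n : ℝ) (llr ρ γ x)) ∂ρ := by
          refine lintegral_congr fun x => (hsup x).symm
      _ = ⨆ n : ℕ, ∫⁻ x, ENNReal.ofReal (min (n : ℝ) (llr ρ γ x)) ∂ρ := hlsup
      _ ≤ ENNReal.ofReal (c + 2) := iSup_le htrunc_le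
  have hint : Integrable (llr ρ γ) ρ := by
    refine ⟨(stronglyMeasurable_llr ρ γ).aestronglyMeasurable, ?_⟩
    rw [hasFiniteIntegral_iff_norm]
    have hptw : ∀ x, ENNReal.ofReal ‖llr ρ γ x‖
        ≤ ENNReal.ofReal (llr ρ γ x) + ENNReal.ofReal (-llr ρ γ x) := by
      intro x
      rcases le_total 0 (llr ρ γ x) with hl | hl
      · rw [Real.norm_eq_abs, abs_of_nonneg hl]; exact le_self_add
      · rw [Real.norm_eq_abs, abs_of_nonpos hl]; exact le_add_self
    calc ∫⁻ x, ENNReal.ofReal ‖llr ρ γ x‖ ∂ρ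
        ≤ ∫⁻ x, (ENNReal.ofReal (llr ρ γ x) + ENNReal.ofReal (-llr ρ γ x)) ∂ρ :=
          lintegral_mono hptw
      _ = (∫⁻ x, ENNReal.ofReal (llr ρ γ x) ∂ρ) + ∫⁻ x, ENNReal.ofReal (-llr ρ γ x) ∂ρ :=
          lintegral_add_left ((measurable_llr ρ γ).ennreal_ofReal) _
      _ < ⊤ := ENNReal.add_lt_top.2
          ⟨lt_of_le_of_lt hpos_fin ENNReal.ofReal_lt_top, lt_of_le_of_lt hneg ENNReal.one_lt_top⟩
  have habs_clamp : ∀ (n : ℕ) (a : ℝ), |max (-(n : ℝ)) (min (n : ℝ) a)| ≤ |a| := by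
    intro n a
    rcases le_total 0 a with hl | hl
    · have h0 : (0 : ℝ) ≤ min (n : ℝ) a := le_min (Nat.cast_nonneg n) hl
      rw [max_eq_right (le_trans (by simp) h0), abs_of_nonneg h0, abs_of_nonneg hl]
      exact min_le_right _ _
    · have hmin : min (n : ℝ) a = a := min_eq_right (hl.trans (Nat.cast_nonneg n))
      rw [hmin, abs_of_nonpos (max_le (by simp) hl), abs_of_nonpos hl]
      simp [le_max_right]
  -- final limit
  have htend_ρ : Tendsto (fun n => ∫ x, g n x ∂ρ) atTop (nhds (∫ x, llr ρ γ x ∂ρ)) := by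
    refine tendsto_integral_of_dominated_convergence (fun x => |llr ρ γ x|)
      (fun n => (hgm n).aestronglyMeasurable) hint.abs (fun n => ?_) ?_
    · filter_upwards [hgan] with x hx
      rw [Real.norm_eq_abs, hx n]
      exact habs_clamp n _
    · filter_upwards [hgan] with x hx
      have hev : (fun n : ℕ => g n x) =ᶠ[atTop] fun _ => llr ρ γ x := by
        obtain ⟨N, hN⟩ := exists_nat_ge |llr ρ γ x|
        refine Filter.eventually_atTop.2 ⟨N, fun n hn => ?_⟩
        have habs : |llr ρ γ x| ≤ (n : ℝ) := hN.trans (by exact_mod_cast hn)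
        show g n x = llr ρ γ x
        rw [hx n, min_eq_right (abs_le.1 habs).2, max_eq_right (abs_le.1 habs).1]
      exact Tendsto.congr' hev.symm tendsto_const_nhds
  have hlog_tend : Tendsto (fun n => c + Real.log (∫ x, Real.exp (g n x) ∂γ)) atTop
      (nhds c) := by
    have h1 : Tendsto (fun n => Real.log (∫ x, Real.exp (g n x) ∂γ)) atTop (nhds 0) := by
      have := ((Real.continuousAt_log (by norm_num : (1 : ℝ) ≠ 0)).tendsto).comp hexp_tendsto
      simpa [Function.comp_def] using this
    simpa using tendsto_const_nhds.add h1
  refine ⟨hac, hint, ?_⟩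
  exact le_of_tendsto_of_tendsto' htend_ρ hlog_tend
    (fun n => hext (g n) n (hgm n) (Nat.cast_nonneg n) (hgB n))
end DVTop

section MainAux

variable {H : Type*} [NormedAddCommGroup H] [InnerProductSpace ℝ H] [CompleteSpace H]
  [TopologicalSpace.SeparableSpace H] [MeasurableSpace H] [BorelSpace H]

lemma isProbabilityMeasure_of_coupling {ρ₀ ρ₁ : Measure H} [IsProbabilityMeasure ρ₀]
    {π : Measure (H × H)} (hπ : π ∈ Coupling ρ₀ ρ₁) : IsProbabilityMeasure π := by
  constructor
  have h1 : Measure.map Prod.fst π Set.univ = 1 := by rw [hπ.1]; exact measure_univ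
  rwa [Measure.map_apply measurable_fst MeasurableSet.univ, Set.preimage_univ] at h1

lemma W1_le_Weps {ρ₀ ρ₁ : Measure H} {e : ℝ} (he : 0 < e) : W1 ρ₀ ρ₁ ≤ Weps e ρ₀ ρ₁ := by
  refine le_iInf₂ fun π' hπ' => ?_
  refine le_trans (iInf₂_le π' hπ') ?_
  refine lintegral_mono fun p => ENNReal.ofReal_le_ofReal ?_
  have h1 : 0 ≤ alphaCost (p.1 - p.2) := Real.sqrt_nonneg _
  nlinarith

end MainAux

/-- If `π` is a weak limit point of solutions `π_ε` of the perturbed problems `(P_ε)`, each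
satisfying the `ε`-entropy convexity inequality, then the relative entropy is `1`-convex along
`ρ_t = ((1-t)P₁ + tP₂)_#π`; in particular each `ρ_t` has finite relative entropy, hence is
absolutely continuous w.r.t. `γ`. -/
theorem entropy_convexity_of_weak_limit
    (hinf : ¬ FiniteDimensional ℝ H)
    (γ : Measure H) (hγ : IsCenteredGaussian γ) (hTi : TiserCondition γ)
    (ρ₀ ρ₁ : Measure H) [IsProbabilityMeasure ρ₀] [IsProbabilityMeasure ρ₁]
    (h₀ : Ent γ ρ₀ < ⊤) (h₁ : Ent γ ρ₁ < ⊤)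
    (π : Measure (H × H)) (hπ : π ∈ Coupling ρ₀ ρ₁)
    (ε : ℕ → ℝ) (πε : ℕ → Measure (H × H))
    (hεpos : ∀ n, 0 < ε n) (hε0 : Tendsto ε atTop (nhds 0))
    (hcpl : ∀ n, πε n ∈ Coupling ρ₀ ρ₁)
    (hopt : ∀ n, ∀ π' ∈ Coupling ρ₀ ρ₁, costEps (ε n) (πε n) ≤ costEps (ε n) π')
    (hconv : ∀ n, ∀ t ∈ Set.Ioo (0 : ℝ) 1,
      Ent γ (interp t (πε n))
        ≤ ((1 - t : ℝ) : EReal) * Ent γ ρ₀ + ((t : ℝ) : EReal) * Ent γ ρ₁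
          - ((ENNReal.ofReal (t * (1 - t) / (2 * (1 + ε n) ^ 2)) *
              (Weps (ε n) ρ₀ ρ₁ - ENNReal.ofReal (ε n)) ^ 2 : ℝ≥0∞) : EReal))
    (hlim : WeakLimit πε π) :
    ∀ t ∈ Set.Ioo (0 : ℝ) 1,
      Ent γ (interp t π)
          ≤ ((1 - t : ℝ) : EReal) * Ent γ ρ₀ + ((t : ℝ) : EReal) * Ent γ ρ₁
            - ((ENNReal.ofReal (t * (1 - t) / 2) * (W1 ρ₀ ρ₁ * W1 ρ₀ ρ₁) : ℝ≥0∞) : EReal)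
        ∧ Ent γ (interp t π) < ⊤ ∧ interp t π ≪ γ := by
  haveI hγP : IsProbabilityMeasure γ := hγ.1
  haveI : SecondCountableTopology H := UniformSpace.secondCountable_of_separable H
  haveI hπP : IsProbabilityMeasure π := isProbabilityMeasure_of_coupling hπ
  haveI hπεP : ∀ n, IsProbabilityMeasure (πε n) := fun n =>
    isProbabilityMeasure_of_coupling (hcpl n)
  rintro t ⟨ht0, ht1⟩
  -- the interpolation map
  set T : H × H → H := fun p => (1 - t) • p.1 + t • p.2 with hT
  have hTcont : Continuous T := (continuous_fst.const_smul _).add (continuous_snd.const_smul _)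
  have hTmeas : Measurable T := hTcont.measurable
  haveI hrtP : IsProbabilityMeasure (interp t π) := Measure.isProbabilityMeasure_map hTmeas.aemeasurable
  haveI hrtnP : ∀ n, IsProbabilityMeasure (interp t (πε n)) := fun n =>
    Measure.isProbabilityMeasure_map hTmeas.aemeasurable
  -- entropies of the endpoints are real
  obtain ⟨hac₀, hint₀, hE₀⟩ := Ent_eq_of_lt_top h₀
  obtain ⟨hac₁, hint₁, hE₁⟩ := Ent_eq_of_lt_top h₁
  set E₀ : ℝ := ∫ x, llr ρ₀ γ x ∂ρ₀ with hE₀def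
  set E₁ : ℝ := ∫ x, llr ρ₁ γ x ∂ρ₁ with hE₁def
  set a : ℝ := (1 - t) * E₀ + t * E₁ with hadef
  -- penalty terms
  set Pen : ℕ → ℝ≥0∞ := fun n => ENNReal.ofReal (t * (1 - t) / (2 * (1 + ε n) ^ 2)) *
      (Weps (ε n) ρ₀ ρ₁ - ENNReal.ofReal (ε n)) ^ 2 with hPendef
  have hconv' : ∀ n, Ent γ (interp t (πε n)) ≤ (a : EReal) - ((Pen n : ℝ≥0∞) : EReal) := by
    intro n
    have h := hconv n t ⟨ht0, ht1⟩
    rwa [hE₀, hE₁, ← EReal.coe_mul, ← EReal.coe_mul, ← EReal.coe_add] at h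
  have hPen_ne_top : ∀ n, Pen n ≠ ⊤ := by
    intro n hcontra
    have h := hconv' n
    rw [hcontra, EReal.coe_ennreal_top, sub_eq_add_neg, EReal.neg_top, EReal.add_bot,
      le_bot_iff] at h
    exact Ent_ne_bot γ (interp t (πε n)) h
  -- W1 is finite
  have hW1 : W1 ρ₀ ρ₁ ≠ ⊤ := by
    intro hcontra
    apply hPen_ne_top 0
    have hWtop : Weps (ε 0) ρ₀ ρ₁ = ⊤ :=
      top_le_iff.1 (hcontra ▸ W1_le_Weps (hεpos 0))
    have hsub : Weps (ε 0) ρ₀ ρ₁ - ENNReal.ofReal (ε 0) = ⊤ :=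
      ENNReal.sub_eq_top_iff.2 ⟨hWtop, ENNReal.ofReal_ne_top⟩
    have hc0 : ENNReal.ofReal (t * (1 - t) / (2 * (1 + ε 0) ^ 2)) ≠ 0 := by
      refine (ENNReal.ofReal_pos.2 ?_).ne'
      have h1 := hεpos 0
      have h1t : (0:ℝ) < 1 - t := by linarith
      have hden : (0:ℝ) < 2 * (1 + ε 0) ^ 2 := by nlinarith
      exact div_pos (mul_pos ht0 h1t) hden
    rw [hPendef]
    simp only [hsub]
    rw [ENNReal.top_pow (by norm_num), ENNReal.mul_top hc0]
  set w : ℝ := (W1 ρ₀ ρ₁).toReal with hwdef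
  have hw0 : 0 ≤ w := ENNReal.toReal_nonneg
  have hW1eq : W1 ρ₀ ρ₁ = ENNReal.ofReal w := (ENNReal.ofReal_toReal hW1).symm
  set r : ℕ → ℝ := fun n => t * (1 - t) / (2 * (1 + ε n) ^ 2) * (max (w - ε n) 0) ^ 2 with hrdef
  have hr0 : ∀ n, 0 ≤ r n := by
    intro n
    have h1 := hεpos n
    have h1t : (0:ℝ) < 1 - t := by linarith
    have hden : (0:ℝ) < 2 * (1 + ε n) ^ 2 := by nlinarith
    have h2 : (0:ℝ) ≤ max (w - ε n) 0 := le_max_right _ _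
    have h3 := div_pos (mul_pos ht0 h1t) hden
    simp only [hrdef]
    exact mul_nonneg h3.le (sq_nonneg _)
  have hPenlb : ∀ n, ENNReal.ofReal (r n) ≤ Pen n := by
    intro n
    have hstep : ENNReal.ofReal (max (w - ε n) 0) ≤ Weps (ε n) ρ₀ ρ₁ - ENNReal.ofReal (ε n) := by
      have h1 : ENNReal.ofReal (max (w - ε n) 0) ≤ W1 ρ₀ ρ₁ - ENNReal.ofReal (ε n) := by
        rcases le_total (w - ε n) 0 with hle | hle
        · rw [max_eq_right hle]
          simp
        · rw [max_eq_left hle, hW1eq, ← ENNReal.ofReal_sub _ (hεpos n).le]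
      exact h1.trans (tsub_le_tsub_right (W1_le_Weps (hεpos n)) _)
    calc ENNReal.ofReal (r n)
        = ENNReal.ofReal (t * (1 - t) / (2 * (1 + ε n) ^ 2)) *
            (ENNReal.ofReal (max (w - ε n) 0)) ^ 2 := by
          have h1 := hεpos n
          have h1t : (0:ℝ) < 1 - t := by linarith
          have hden : (0:ℝ) < 2 * (1 + ε n) ^ 2 := by nlinarith
          rw [hrdef, ENNReal.ofReal_mul (div_pos (mul_pos ht0 h1t) hden).le,
            ENNReal.ofReal_pow (le_max_right _ _)]
      _ ≤ Pen n := by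
          rw [hPendef]
          exact mul_le_mul_right (pow_le_pow_left' hstep 2) _
  -- the entropy of the interpolants is real and bounded
  have hrtn_bound : ∀ n, Ent γ (interp t (πε n)) ≤ ((a - r n : ℝ) : EReal) := by
    intro n
    refine (hconv' n).trans ?_
    rw [EReal.coe_sub]
    refine EReal.sub_le_sub le_rfl ?_
    rw [show ((r n : ℝ) : EReal) = ((ENNReal.ofReal (r n) : ℝ≥0∞) : EReal) by
      rw [EReal.coe_ennreal_ofReal, max_eq_left (hr0 n)]]
    exact EReal.coe_ennreal_le_coe_ennreal_iff.2 (hPenlb n)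
  have hrtn : ∀ n, interp t (πε n) ≪ γ ∧ Integrable (llr (interp t (πε n)) γ) (interp t (πε n))
      ∧ ∫ x, llr (interp t (πε n)) γ x ∂(interp t (πε n)) ≤ a - r n := by
    intro n
    obtain ⟨hacn, hintn, heqn⟩ := Ent_eq_of_lt_top ((hrtn_bound n).trans_lt (EReal.coe_lt_top _))
    refine ⟨hacn, hintn, ?_⟩
    have := (heqn ▸ hrtn_bound n)
    exact_mod_cast this
  -- weak convergence of the interpolants
  have hweak : ∀ f : BoundedContinuousFunction H ℝ,
      Tendsto (fun n => ∫ x, f x ∂(interp t (πε n))) atTop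
        (nhds (∫ x, f x ∂(interp t π))) := by
    intro f
    have hmap : ∀ m : Measure (H × H),
        ∫ x, f x ∂(interp t m) = ∫ p, f (T p) ∂m := fun m =>
      integral_map hTmeas.aemeasurable f.continuous.measurable.aestronglyMeasurable
    simp_rw [hmap]
    exact hlim (f.compContinuous ⟨T, hTcont⟩)
  -- limit of the r n
  set q : ℝ := t * (1 - t) / 2 * w ^ 2 with hqdef
  have hrlim : Tendsto r atTop (nhds q) := by
    have hφ : ContinuousAt (fun e : ℝ => t * (1 - t) / (2 * (1 + e) ^ 2) * (max (w - e) 0) ^ 2)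
        0 := by
      apply ContinuousAt.mul
      · exact (continuousAt_const.div (by fun_prop) (by norm_num))
      · exact (((continuous_const.sub continuous_id).max continuous_const).pow 2).continuousAt
    have h2 : Tendsto (fun n => t * (1 - t) / (2 * (1 + ε n) ^ 2) * (max (w - ε n) 0) ^ 2)
        atTop (nhds (t * (1 - t) / (2 * (1 + (0:ℝ)) ^ 2) * (max (w - (0:ℝ)) 0) ^ 2)) :=
      hφ.tendsto.comp hε0
    have h3 : t * (1 - t) / (2 * (1 + (0:ℝ)) ^ 2) * (max (w - (0:ℝ)) 0) ^ 2 = q := by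
      rw [hqdef]
      norm_num [max_eq_left hw0]
    rw [← h3]
    exact h2
  -- pass to the limit in the dual formulation
  have hkey : ∀ f : BoundedContinuousFunction H ℝ,
      ∫ x, f x ∂(interp t π) ≤ (a - q) + Real.log (∫ x, Real.exp (f x) ∂γ) := by
    intro f
    have hfB : ∀ x, |f x| ≤ ‖f‖ := fun x => by
      rw [← Real.norm_eq_abs]
      exact f.norm_coe_le_norm x
    have hchain : ∀ n, ∫ x, f x ∂(interp t (πε n))
        ≤ (a - r n) + Real.log (∫ x, Real.exp (f x) ∂γ) := by
      intro n
      obtain ⟨hacn, hintn, hIn⟩ := hrtn n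
      have := dv_le hacn hintn f.continuous.measurable hfB
      linarith
    have hRHS : Tendsto (fun n => (a - r n) + Real.log (∫ x, Real.exp (f x) ∂γ)) atTop
        (nhds ((a - q) + Real.log (∫ x, Real.exp (f x) ∂γ))) :=
      ((tendsto_const_nhds.sub hrlim).add tendsto_const_nhds)
    exact le_of_tendsto_of_tendsto' (hweak f) hRHS hchain
  obtain ⟨hacT, hintT, hIT⟩ := dv_hard hkey
  have hEntT : Ent γ (interp t π) = ((∫ x, llr (interp t π) γ x ∂(interp t π) : ℝ) : EReal) := by
    rw [Ent, if_pos ⟨hacT, hintT⟩]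
  refine ⟨?_, ?_, hacT⟩
  · rw [hEntT, hE₀, hE₁, ← EReal.coe_mul, ← EReal.coe_mul, ← EReal.coe_add]
    have hQ : ((ENNReal.ofReal (t * (1 - t) / 2) * (W1 ρ₀ ρ₁ * W1 ρ₀ ρ₁) : ℝ≥0∞) : EReal)
        = ((q : ℝ) : EReal) := by
      have h1t : (0:ℝ) < 1 - t := by linarith
      have hq0 : 0 ≤ t * (1 - t) / 2 := by
        have := mul_pos ht0 h1t
        linarith
      have hqnn : 0 ≤ t * (1 - t) / 2 * (w * w) := mul_nonneg hq0 (mul_nonneg hw0 hw0)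
      rw [hW1eq, ← ENNReal.ofReal_mul hw0, ← ENNReal.ofReal_mul hq0,
        EReal.coe_ennreal_ofReal, max_eq_left hqnn, hqdef, sq]
    rw [hQ, ← EReal.coe_sub]
    exact EReal.coe_le_coe_iff.2 hIT
  · rw [hEntT]
    exact EReal.coe_lt_top _
end

section
/- Let μ and ν be probability measures on a Polish metric space (X,d) and let c(x,y) = d(x,y). If Π is an optimal coupling for the Monge–Kantorovich problem between μ and ν with respect to c, and the optimal cost is finite, then there exists a μ-measurable 1-Lipschitz function u : X → ℝ such that u(x) − u(y) = d(x,y) for all (x,y) in the support of Π, and u(x) − u(y) ≤ d(x,y) for all x,y ∈ X. -/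
open MeasureTheory ProbabilityTheory Filter Metric Set
open scoped ENNReal NNReal

/-- The support of a measure: points all of whose neighborhoods have positive measure
(equivalently, the complement of the largest open null set, i.e. the smallest closed set
of full measure when the space is second countable). -/
def msupport {X : Type*} [TopologicalSpace X] [MeasurableSpace X] (μ : Measure X) : Set X :=
  {x | ∀ U : Set X, IsOpen U → x ∈ U → 0 < μ U}


namespace KantAux

lemma ofReal_sum_le' {ι : Type*} (s : Finset ι) (g : ι → ℝ) :
    ENNReal.ofReal (∑ i ∈ s, g i) ≤ ∑ i ∈ s, ENNReal.ofReal (g i) := by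
  classical
  induction s using Finset.induction with
  | empty => simp
  | insert _ _ h ih =>
      rw [Finset.sum_insert h, Finset.sum_insert h]
      exact le_trans ENNReal.ofReal_add_le (add_le_add le_rfl ih)

variable {X : Type*} [MetricSpace X]

/-- Rockafellar chain value. -/
noncomputable def chainVal (p₀ : X × X) : X → List (X × X) → ℝ
  | x, [] => dist x p₀.2 - dist p₀.1 p₀.2
  | x, p :: l => dist x p.2 - dist p.1 p.2 + chainVal p₀ p.1 l

def lastFst : X → List (X × X) → X
  | x, [] => x
  | _, p :: l => lastFst p.1 l

noncomputable def psum : X → List (X × X) → ℝ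
  | _, [] => 0
  | x, p :: l => dist x p.2 + psum p.1 l

noncomputable def diag (l : List (X × X)) : ℝ := (l.map fun p => dist p.1 p.2).sum

lemma diag_cons (p : X × X) (l : List (X × X)) : diag (p :: l) = dist p.1 p.2 + diag l := by
  simp [diag]

lemma chainVal_eq (p₀ : X × X) (l : List (X × X)) : ∀ x : X,
    chainVal p₀ x l = psum x l + dist (lastFst x l) p₀.2 - diag l - dist p₀.1 p₀.2 := by
  induction l with
  | nil => intro x; simp [chainVal, psum, lastFst, diag]
  | cons p t ih =>
      intro x
      simp only [chainVal, psum, lastFst, diag_cons, ih p.1]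
      ring

lemma chainVal_lip (p₀ : X × X) (l : List (X × X)) (x y : X) :
    chainVal p₀ x l ≤ chainVal p₀ y l + dist x y := by
  cases l with
  | nil => simp only [chainVal]; have := dist_triangle x y p₀.2; linarith
  | cons p t => simp only [chainVal]; have := dist_triangle x y p.2; linarith

lemma chainVal_cons_self (p₀ : X × X) (p : X × X) (l : List (X × X)) :
    chainVal p₀ p.2 (p :: l) = chainVal p₀ p.1 l - dist p.1 p.2 := by
  simp [chainVal]; ring

lemma sum_range_getD {P : Type*} (g : P → ℝ) (d : P) : ∀ (m : List P),
    ∑ i ∈ Finset.range m.length, g (m.getD i d) = (m.map g).sum := by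
  intro m
  induction m with
  | nil => simp
  | cons a t ih =>
      rw [List.length_cons, Finset.sum_range_succ']
      simp only [List.getD_cons_succ, List.getD_cons_zero, List.map_cons, List.sum_cons, ih]
      ring

lemma path_sum (d : X × X) : ∀ (t : List (X × X)) (a : X × X),
    ∑ i ∈ Finset.range t.length,
      dist (((a :: t).getD i d).1) (((a :: t).getD (i + 1) d).2) = psum a.1 t := by
  intro t
  induction t with
  | nil => simp [psum]
  | cons b t' ih =>
      intro a
      rw [List.length_cons, Finset.sum_range_succ']
      simp only [List.getD_cons_succ, List.getD_cons_zero, psum]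
      have ih' := ih b
      simp only [List.getD_cons_succ] at ih'
      rw [ih']
      ring

lemma getD_last_fst (d : X × X) : ∀ (t : List (X × X)) (a : X × X),
    (((a :: t).getD t.length d)).1 = lastFst a.1 t := by
  intro t
  induction t with
  | nil => intro a; simp [lastFst]
  | cons b t' ih =>
      intro a
      rw [List.length_cons, List.getD_cons_succ]
      exact ih b

/-- Bridge: `chainVal` at base equals the cyclic pairing sum minus the diagonal sum. -/
lemma bridge (p₀ : X × X) (l : List (X × X)) :
    chainVal p₀ p₀.1 l =
      (∑ i ∈ Finset.range (l.length + 1),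
        dist (((p₀ :: l).getD i p₀).1) (((p₀ :: l).getD ((i + 1) % (l.length + 1)) p₀).2))
      - ∑ i ∈ Finset.range (l.length + 1),
          dist (((p₀ :: l).getD i p₀).1) (((p₀ :: l).getD i p₀).2) := by
  have hdiag : ∑ i ∈ Finset.range (l.length + 1),
      dist (((p₀ :: l).getD i p₀).1) (((p₀ :: l).getD i p₀).2)
      = dist p₀.1 p₀.2 + diag l := by
    have := sum_range_getD (fun p : X × X => dist p.1 p.2) p₀ (p₀ :: l)
    simp only [List.length_cons] at this
    rw [this]
    simp [diag]
  have hcyc : (∑ i ∈ Finset.range (l.length + 1),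
      dist (((p₀ :: l).getD i p₀).1) (((p₀ :: l).getD ((i + 1) % (l.length + 1)) p₀).2))
      = psum p₀.1 l + dist (lastFst p₀.1 l) p₀.2 := by
    rw [Finset.sum_range_succ]
    have hmod : (l.length + 1) % (l.length + 1) = 0 := Nat.mod_self _
    rw [hmod]
    have hlast : (((p₀ :: l).getD l.length p₀)).1 = lastFst p₀.1 l := getD_last_fst p₀ l p₀
    have hpath : ∑ i ∈ Finset.range l.length,
        dist (((p₀ :: l).getD i p₀).1) (((p₀ :: l).getD ((i + 1) % (l.length + 1)) p₀).2)
        = psum p₀.1 l := by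
      rw [← path_sum p₀ l p₀]
      apply Finset.sum_congr rfl
      intro i hi
      rw [Finset.mem_range] at hi
      rw [Nat.mod_eq_of_lt (by omega)]
    rw [hpath, hlast]
    simp
  rw [chainVal_eq, hdiag, hcyc]
  ring

/-- Rockafellar construction for the distance cost. -/
lemma rockafellar (S : Set (X × X)) (p₀ : X × X)
    (hcyc : ∀ l : List (X × X), (∀ p ∈ l, p ∈ S) → 0 ≤ chainVal p₀ p₀.1 l) :
    ∃ u : X → ℝ, LipschitzWith 1 u ∧ (∀ p ∈ S, u p.1 - u p.2 = dist p.1 p.2) ∧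
      ∀ x y : X, u x - u y ≤ dist x y := by
  set V : X → Set ℝ := fun x => {v | ∃ l : List (X × X), (∀ p ∈ l, p ∈ S) ∧ v = chainVal p₀ x l}
    with hV
  have hne : ∀ x, (V x).Nonempty := fun x =>
    ⟨chainVal p₀ x List.nil, List.nil, fun p hp => absurd hp List.not_mem_nil, rfl⟩
  have hbdd : ∀ x, BddBelow (V x) := by
    intro x
    refine ⟨-dist p₀.1 x, ?_⟩
    rintro v ⟨l, hl, rfl⟩
    have h1 := chainVal_lip p₀ l p₀.1 x
    have h2 := hcyc l hl
    linarith
  set u : X → ℝ := fun x => sInf (V x) with hu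
  have hmem : ∀ x (l : List (X × X)), (∀ p ∈ l, p ∈ S) → u x ≤ chainVal p₀ x l := by
    intro x l hl
    exact csInf_le (hbdd x) ⟨l, hl, rfl⟩
  have h1 : ∀ x y : X, u x - u y ≤ dist x y := by
    intro x y
    have : u x - dist x y ≤ u y := by
      apply le_csInf (hne y)
      rintro v ⟨l, hl, rfl⟩
      have := chainVal_lip p₀ l x y
      have := hmem x l hl
      linarith
    linarith
  have h2 : ∀ p ∈ S, dist p.1 p.2 ≤ u p.1 - u p.2 := by
    rintro p hp
    have : u p.2 + dist p.1 p.2 ≤ u p.1 := by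
      have step : u p.2 + dist p.1 p.2 ≤ sInf (V p.1) := by
        apply le_csInf (hne p.1)
        rintro v ⟨l, hl, rfl⟩
        have hext : u p.2 ≤ chainVal p₀ p.2 (p :: l) := by
          apply hmem
          intro q hq
          rcases List.mem_cons.1 hq with h | h
          · exact h ▸ hp
          · exact hl q h
        rw [chainVal_cons_self] at hext
        linarith
      exact step
    linarith
  refine ⟨u, ?_, fun p hp => le_antisymm (h1 p.1 p.2) (h2 p hp), h1⟩
  apply LipschitzWith.of_dist_le_mul
  intro x y
  rw [Real.dist_eq, NNReal.coe_one, one_mul]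
  rw [abs_sub_le_iff]
  exact ⟨h1 x y, by rw [dist_comm]; exact h1 y x⟩


section CyclicMono

variable [MeasurableSpace X] [BorelSpace X] [SecondCountableTopology X]

lemma cyclic_mono
    (μ ν : Measure X) [IsProbabilityMeasure μ] [IsProbabilityMeasure ν]
    (π : Measure (X × X))
    (hπ₁ : Measure.map Prod.fst π = μ) (hπ₂ : Measure.map Prod.snd π = ν)
    (hopt : ∀ π' : Measure (X × X), Measure.map Prod.fst π' = μ →
      Measure.map Prod.snd π' = ν → ∫⁻ p, edist p.1 p.2 ∂π ≤ ∫⁻ p, edist p.1 p.2 ∂π')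
    (hfin : ∫⁻ p, edist p.1 p.2 ∂π ≠ ⊤)
    (n : ℕ) (f : Fin n → X × X) (e : Equiv.Perm (Fin n))
    (hf : ∀ i, f i ∈ msupport π) :
    ∑ i, dist (f i).1 (f i).2 ≤ ∑ i, dist (f i).1 (f (e i)).2 := by
  by_contra hcon
  push_neg at hcon
  set A := ∑ i, dist (f i).1 (f i).2 with hA
  set Bs := ∑ i, dist (f i).1 (f (e i)).2 with hBs
  -- n is positive
  have hn : 0 < n := by
    rcases Nat.eq_zero_or_pos n with h | h
    · subst h; simp [hA, hBs] at hcon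
    · exact h
  haveI : Nonempty (Fin n) := Fin.pos_iff_nonempty.mp hn
  have hnR : (0 : ℝ) < n := by exact_mod_cast hn
  have hnE0 : (n : ℝ≥0∞) ≠ 0 := by exact_mod_cast hn.ne'
  have hnET : (n : ℝ≥0∞) ≠ ⊤ := ENNReal.natCast_ne_top n
  -- π is a probability measure
  haveI hπprob : IsProbabilityMeasure π := by
    constructor
    have : (Measure.map Prod.fst π) Set.univ = 1 := by rw [hπ₁]; exact measure_univ
    rwa [Measure.map_apply measurable_fst MeasurableSet.univ, Set.preimage_univ] at this
  -- choice of δ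
  set δ : ℝ := (A - Bs) / (8 * n) with hδdef
  have hδ : 0 < δ := div_pos (by linarith) (by positivity)
  -- the balls
  set B : Fin n → Set (X × X) := fun i => Metric.ball (f i) δ with hBdef
  have hBopen : ∀ i, IsOpen (B i) := fun i => isOpen_ball
  have hBmeas : ∀ i, MeasurableSet (B i) := fun i => (hBopen i).measurableSet
  have hBpos : ∀ i, 0 < π (B i) := fun i => hf i (B i) (hBopen i) (mem_ball_self hδ)
  have hBne : ∀ i, π (B i) ≠ 0 := fun i => (hBpos i).ne'
  have hBtop : ∀ i, π (B i) ≠ ⊤ := fun i => measure_ne_top π _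
  -- the minimum mass
  set lam : ℝ≥0∞ := Finset.univ.inf' Finset.univ_nonempty (fun i => π (B i)) with hlam
  have hlampos : 0 < lam := (Finset.lt_inf'_iff _).2 fun i _ => hBpos i
  have hlamle : ∀ i, lam ≤ π (B i) := fun i => Finset.inf'_le _ (Finset.mem_univ i)
  have hlam0 : lam ≠ 0 := hlampos.ne'
  have hlamtop : lam ≠ ⊤ := by
    rcases ‹Nonempty (Fin n)› with ⟨i0⟩
    exact (lt_of_le_of_lt (hlamle i0) (measure_lt_top π _)).ne
  set κ : ℝ≥0∞ := lam / n with hκ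
  have hκ0 : κ ≠ 0 := by
    rw [hκ]; simp [ENNReal.div_eq_zero_iff, hlam0, hnET]
  have hκtop : κ ≠ ⊤ := by
    rw [hκ]; simp [ENNReal.div_eq_top, hlam0, hlamtop, hnE0]
  -- the pieces
  set c : Fin n → ℝ≥0∞ := fun i => lam / (n * π (B i)) with hc
  have hcmul : ∀ i, c i * π (B i) = κ := by
    intro i
    simp only [hc, hκ, div_eq_mul_inv]
    rw [ENNReal.mul_inv (Or.inl hnE0) (Or.inl hnET)]
    calc lam * ((↑n)⁻¹ * (π (B i))⁻¹) * π (B i)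
        = lam * (↑n)⁻¹ * ((π (B i))⁻¹ * π (B i)) := by ring
      _ = lam * (↑n)⁻¹ := by rw [ENNReal.inv_mul_cancel (hBne i) (hBtop i), mul_one]
  have hcle : ∀ i, c i ≤ (n : ℝ≥0∞)⁻¹ := by
    intro i
    simp only [hc]
    calc lam / (n * π (B i)) ≤ π (B i) / (n * π (B i)) :=
          ENNReal.div_le_div_right (hlamle i) _
      _ = (n : ℝ≥0∞)⁻¹ := by
          rw [div_eq_mul_inv, ENNReal.mul_inv (Or.inl hnE0) (Or.inl hnET)]
          calc π (B i) * ((↑n)⁻¹ * (π (B i))⁻¹)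
              = ((π (B i))⁻¹ * π (B i)) * (↑n)⁻¹ := by ring
            _ = (↑n)⁻¹ := by rw [ENNReal.inv_mul_cancel (hBne i) (hBtop i), one_mul]
  set s : Fin n → Measure (X × X) := fun i => (c i) • π.restrict (B i) with hs
  have hs_univ : ∀ i, s i Set.univ = κ := by
    intro i
    rw [hs]
    simp only [Measure.smul_apply, smul_eq_mul, Measure.restrict_apply_univ]
    exact hcmul i
  set α : Fin n → Measure X := fun i => (s i).map Prod.fst with hα
  set β : Fin n → Measure X := fun i => (s i).map Prod.snd with hβ
  have hα_univ : ∀ i, α i Set.univ = κ := by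
    intro i
    rw [hα]
    rw [Measure.map_apply measurable_fst MeasurableSet.univ, Set.preimage_univ]
    exact hs_univ i
  have hβ_univ : ∀ i, β i Set.univ = κ := by
    intro i
    rw [hβ]
    rw [Measure.map_apply measurable_snd MeasurableSet.univ, Set.preimage_univ]
    exact hs_univ i
  haveI : ∀ i, IsFiniteMeasure (α i) := fun i => ⟨by rw [hα_univ i]; exact hκtop.lt_top⟩
  haveI : ∀ i, IsFiniteMeasure (β i) := fun i => ⟨by rw [hβ_univ i]; exact hκtop.lt_top⟩
  set t : Fin n → Measure (X × X) := fun i => κ⁻¹ • ((α i).prod (β (e i))) with ht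
  set σ : Measure (X × X) := ∑ i, s i with hσ
  have hσle : σ ≤ π := by
    rw [Measure.le_iff]
    intro A hAmeas
    rw [hσ, Measure.finset_sum_apply]
    have hterm : ∀ i, s i A ≤ (n : ℝ≥0∞)⁻¹ * π A := by
      intro i
      rw [hs]
      simp only [Measure.smul_apply, smul_eq_mul]
      calc c i * (π.restrict (B i)) A ≤ c i * π A := by
            gcongr
            exact Measure.restrict_le_self
        _ ≤ (n : ℝ≥0∞)⁻¹ * π A := by gcongr; exact hcle i
    calc ∑ i, s i A ≤ ∑ _i : Fin n, (n : ℝ≥0∞)⁻¹ * π A := Finset.sum_le_sum fun i _ => hterm i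
      _ = n * ((n : ℝ≥0∞)⁻¹ * π A) := by rw [Finset.sum_const, Finset.card_univ,
            Fintype.card_fin, nsmul_eq_mul]
      _ = π A := by rw [← mul_assoc, ENNReal.mul_inv_cancel hnE0 hnET, one_mul]
  haveI : IsFiniteMeasure σ := ⟨lt_of_le_of_lt (hσle Set.univ) (measure_lt_top π _)⟩
  have hπeq : π - σ + σ = π := Measure.sub_add_cancel_of_le hσle
  -- finiteness instances, named for manual use
  have hαfin : ∀ i, IsFiniteMeasure (α i) := fun i => ⟨by rw [hα_univ i]; exact hκtop.lt_top⟩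
  have hβfin : ∀ i, IsFiniteMeasure (β i) := fun i => ⟨by rw [hβ_univ i]; exact hκtop.lt_top⟩
  -- map of finite sums of measures
  have map_sum : ∀ (g : X × X → X), Measurable g → ∀ (m : Fin n → Measure (X × X)),
      Measure.map g (∑ i, m i) = ∑ i, Measure.map g (m i) := by
    intro g hg m
    ext A hAmeas
    rw [Measure.map_apply hg hAmeas, Measure.finset_sum_apply, Measure.finset_sum_apply]
    exact Finset.sum_congr rfl fun i _ => (Measure.map_apply hg hAmeas).symm
  have hmapfst_t : ∀ i, Measure.map Prod.fst (t i) = α i := by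
    intro i
    haveI := hβfin (e i)
    simp only [ht]
    rw [Measure.map_smul, Measure.map_fst_prod, hβ_univ (e i), smul_smul,
      ENNReal.inv_mul_cancel hκ0 hκtop, one_smul]
  have hmapsnd_t : ∀ i, Measure.map Prod.snd (t i) = β (e i) := by
    intro i
    haveI := hβfin (e i)
    simp only [ht]
    rw [Measure.map_smul, Measure.map_snd_prod, hα_univ i, smul_smul,
      ENNReal.inv_mul_cancel hκ0 hκtop, one_smul]
  set τ : Measure (X × X) := ∑ i, t i with hτ
  set π' : Measure (X × X) := (π - σ) + τ with hπ'def
  have hσfst : ∑ i, α i = Measure.map Prod.fst σ := by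
    rw [hσ, map_sum _ measurable_fst]
  have hσsnd : ∑ i, β i = Measure.map Prod.snd σ := by
    rw [hσ, map_sum _ measurable_snd]
  have hfst : Measure.map Prod.fst π' = μ := by
    rw [hπ'def, Measure.map_add _ _ measurable_fst, hτ, map_sum _ measurable_fst]
    have h1 : ∑ i, Measure.map Prod.fst (t i) = ∑ i, α i :=
      Finset.sum_congr rfl fun i _ => hmapfst_t i
    rw [h1, hσfst, ← Measure.map_add _ _ measurable_fst, hπeq, hπ₁]
  have hsnd : Measure.map Prod.snd π' = ν := by
    rw [hπ'def, Measure.map_add _ _ measurable_snd, hτ, map_sum _ measurable_snd]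
    have h1 : ∑ i, Measure.map Prod.snd (t i) = ∑ i, β i := by
      rw [Finset.sum_congr rfl fun i _ => hmapsnd_t i]
      exact Equiv.sum_comp e β
    rw [h1, hσsnd, ← Measure.map_add _ _ measurable_snd, hπeq, hπ₂]
  -- cost decompositions
  have hmeas_edist : Measurable fun p : X × X => edist p.1 p.2 :=
    (continuous_fst.edist continuous_snd).measurable
  have hCσ : ∫⁻ p, edist p.1 p.2 ∂σ = ∑ i, ∫⁻ p, edist p.1 p.2 ∂(s i) := by
    rw [hσ, lintegral_finset_sum_measure]
  have hCτ : ∫⁻ p, edist p.1 p.2 ∂τ = ∑ i, ∫⁻ p, edist p.1 p.2 ∂(t i) := by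
    rw [hτ, lintegral_finset_sum_measure]
  have hCπdec : ∫⁻ p, edist p.1 p.2 ∂π
      = (∫⁻ p, edist p.1 p.2 ∂(π - σ)) + ∫⁻ p, edist p.1 p.2 ∂σ := by
    conv_lhs => rw [← hπeq]
    rw [lintegral_add_measure]
  have hC0top : (∫⁻ p, edist p.1 p.2 ∂(π - σ)) ≠ ⊤ := by
    have hle : (∫⁻ p, edist p.1 p.2 ∂(π - σ)) ≤ ∫⁻ p, edist p.1 p.2 ∂π := by
      rw [hCπdec]; exact le_self_add
    exact fun h => hfin (top_le_iff.mp (h ▸ hle))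
  have hkey := hopt π' hfst hsnd
  have hCπ' : ∫⁻ p, edist p.1 p.2 ∂π'
      = (∫⁻ p, edist p.1 p.2 ∂(π - σ)) + ∫⁻ p, edist p.1 p.2 ∂τ := by
    rw [hπ'def, lintegral_add_measure]
  rw [hCπdec, hCπ'] at hkey
  have hsum_le : (∫⁻ p, edist p.1 p.2 ∂σ) ≤ ∫⁻ p, edist p.1 p.2 ∂τ :=
    (ENNReal.add_le_add_iff_left hC0top).mp hkey
  -- geometry of the balls
  have hball : ∀ i (p : X × X), p ∈ B i → dist p.1 (f i).1 < δ ∧ dist p.2 (f i).2 < δ := by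
    intro i p hp
    simp only [hBdef] at hp
    rw [mem_ball, Prod.dist_eq, sup_lt_iff] at hp
    exact hp
  -- lower bound for the cost of s i
  have hlow : ∀ i, ENNReal.ofReal (dist (f i).1 (f i).2 - 2 * δ) * κ
      ≤ ∫⁻ p, edist p.1 p.2 ∂(s i) := by
    intro i
    have hpt : ∀ p ∈ B i, ENNReal.ofReal (dist (f i).1 (f i).2 - 2 * δ) ≤ edist p.1 p.2 := by
      intro p hp
      obtain ⟨h1, h2⟩ := hball i p hp
      rw [edist_dist]
      apply ENNReal.ofReal_le_ofReal
      have h1' : dist (f i).1 p.1 < δ := by rw [dist_comm]; exact h1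
      have t1 := dist_triangle (f i).1 p.1 (f i).2
      have t2 := dist_triangle p.1 p.2 (f i).2
      linarith
    calc ENNReal.ofReal (dist (f i).1 (f i).2 - 2 * δ) * κ
        = c i * (ENNReal.ofReal (dist (f i).1 (f i).2 - 2 * δ) * π (B i)) := by
          rw [← hcmul i]; ring
      _ = c i * ∫⁻ _p in B i, ENNReal.ofReal (dist (f i).1 (f i).2 - 2 * δ) ∂π := by
          rw [setLIntegral_const]
      _ ≤ c i * ∫⁻ p in B i, edist p.1 p.2 ∂π :=
          mul_le_mul_right (setLIntegral_mono hmeas_edist hpt) _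
      _ = ∫⁻ p, edist p.1 p.2 ∂(s i) := by
          simp only [hs]; rw [lintegral_smul_measure, smul_eq_mul]
  -- upper bound for the cost of t i
  have hup : ∀ i, ∫⁻ p, edist p.1 p.2 ∂(t i)
      ≤ ENNReal.ofReal (dist (f i).1 (f (e i)).2 + 2 * δ) * κ := by
    intro i
    haveI := hαfin i
    haveI := hβfin (e i)
    set U : Set X := Metric.ball (f i).1 δ with hU
    set V : Set X := Metric.ball (f (e i)).2 δ with hVd
    have hUmeas : MeasurableSet U := isOpen_ball.measurableSet
    have hVmeas : MeasurableSet V := isOpen_ball.measurableSet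
    have hαU : α i Uᶜ = 0 := by
      simp only [hα]
      rw [Measure.map_apply measurable_fst hUmeas.compl]
      simp only [hs, Measure.smul_apply, smul_eq_mul]
      rw [Measure.restrict_apply (measurable_fst hUmeas.compl)]
      have hempty : (Prod.fst ⁻¹' Uᶜ) ∩ B i = ∅ := by
        ext p
        constructor
        · rintro ⟨hc, hB⟩
          exact absurd (mem_ball.mpr ((hball i p hB).1)) hc
        · intro h
          exact absurd h (Set.notMem_empty p)
      rw [hempty, measure_empty, mul_zero]
    have hβV : β (e i) Vᶜ = 0 := by
      simp only [hβ]
      rw [Measure.map_apply measurable_snd hVmeas.compl]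
      simp only [hs, Measure.smul_apply, smul_eq_mul]
      rw [Measure.restrict_apply (measurable_snd hVmeas.compl)]
      have hempty : (Prod.snd ⁻¹' Vᶜ) ∩ B (e i) = ∅ := by
        ext p
        constructor
        · rintro ⟨hc, hB⟩
          exact absurd (mem_ball.mpr ((hball (e i) p hB).2)) hc
        · intro h
          exact absurd h (Set.notMem_empty p)
      rw [hempty, measure_empty, mul_zero]
    have hρcompl : ((α i).prod (β (e i))) ((U ×ˢ V)ᶜ) = 0 := by
      have hsubc : (U ×ˢ V)ᶜ ⊆ (Uᶜ ×ˢ (univ : Set X)) ∪ ((univ : Set X) ×ˢ Vᶜ) := by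
        intro p hp
        by_cases h1 : p.1 ∈ U
        · right
          refine Set.mem_prod.mpr ⟨trivial, fun h2 => hp (Set.mem_prod.mpr ⟨h1, h2⟩)⟩
        · left
          exact Set.mem_prod.mpr ⟨h1, trivial⟩
      apply measure_mono_null hsubc
      apply le_antisymm _ zero_le
      calc ((α i).prod (β (e i))) ((Uᶜ ×ˢ (univ : Set X)) ∪ ((univ : Set X) ×ˢ Vᶜ))
          ≤ ((α i).prod (β (e i))) (Uᶜ ×ˢ (univ : Set X))
            + ((α i).prod (β (e i))) ((univ : Set X) ×ˢ Vᶜ) := measure_union_le _ _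
        _ = 0 := by
            rw [Measure.prod_prod, Measure.prod_prod, hαU, hβV]
            simp
    have hρuniv : ((α i).prod (β (e i))) Set.univ = κ * κ := by
      rw [← Set.univ_prod_univ, Measure.prod_prod, hα_univ, hβ_univ]
    have hpt : ∀ p ∈ U ×ˢ V,
        edist p.1 p.2 ≤ ENNReal.ofReal (dist (f i).1 (f (e i)).2 + 2 * δ) := by
      rintro p ⟨hp1, hp2⟩
      rw [edist_dist]
      apply ENNReal.ofReal_le_ofReal
      have h1 : dist p.1 (f i).1 < δ := mem_ball.mp hp1
      have h2 : dist p.2 (f (e i)).2 < δ := mem_ball.mp hp2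
      have h2' : dist (f (e i)).2 p.2 < δ := by rw [dist_comm]; exact h2
      have t1 := dist_triangle p.1 (f i).1 p.2
      have t2 := dist_triangle (f i).1 (f (e i)).2 p.2
      linarith
    have hinner : ∫⁻ p, edist p.1 p.2 ∂((α i).prod (β (e i)))
        ≤ ENNReal.ofReal (dist (f i).1 (f (e i)).2 + 2 * δ) * (κ * κ) := by
      rw [← lintegral_add_compl (fun p : X × X => edist p.1 p.2) (hUmeas.prod hVmeas),
        setLIntegral_measure_zero _ _ hρcompl, add_zero]
      calc ∫⁻ p in U ×ˢ V, edist p.1 p.2 ∂((α i).prod (β (e i)))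
          ≤ ∫⁻ _p in U ×ˢ V, ENNReal.ofReal (dist (f i).1 (f (e i)).2 + 2 * δ)
              ∂((α i).prod (β (e i))) := setLIntegral_mono measurable_const hpt
        _ = ENNReal.ofReal (dist (f i).1 (f (e i)).2 + 2 * δ)
              * ((α i).prod (β (e i))) (U ×ˢ V) := setLIntegral_const _ _
        _ ≤ ENNReal.ofReal (dist (f i).1 (f (e i)).2 + 2 * δ) * (κ * κ) := by
            apply mul_le_mul_right
            rw [← hρuniv]
            exact measure_mono (Set.subset_univ _)
    calc ∫⁻ p, edist p.1 p.2 ∂(t i)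
        = κ⁻¹ * ∫⁻ p, edist p.1 p.2 ∂((α i).prod (β (e i))) := by
          simp only [ht]; rw [lintegral_smul_measure, smul_eq_mul]
      _ ≤ κ⁻¹ * (ENNReal.ofReal (dist (f i).1 (f (e i)).2 + 2 * δ) * (κ * κ)) :=
          mul_le_mul_right hinner _
      _ = ENNReal.ofReal (dist (f i).1 (f (e i)).2 + 2 * δ) * κ := by
          calc κ⁻¹ * (ENNReal.ofReal (dist (f i).1 (f (e i)).2 + 2 * δ) * (κ * κ))
              = (κ⁻¹ * κ) * (ENNReal.ofReal (dist (f i).1 (f (e i)).2 + 2 * δ) * κ) := by ring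
            _ = ENNReal.ofReal (dist (f i).1 (f (e i)).2 + 2 * δ) * κ := by
                rw [ENNReal.inv_mul_cancel hκ0 hκtop, one_mul]
  -- assemble the two bounds
  have hfinal : ENNReal.ofReal (A - (n : ℝ) * (2 * δ)) * κ
      ≤ ENNReal.ofReal (Bs + (n : ℝ) * (2 * δ)) * κ := by
    calc ENNReal.ofReal (A - (n : ℝ) * (2 * δ)) * κ
        = ENNReal.ofReal (∑ i, (dist (f i).1 (f i).2 - 2 * δ)) * κ := by
          rw [Finset.sum_sub_distrib, Finset.sum_const, Finset.card_univ, Fintype.card_fin,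
            nsmul_eq_mul, ← hA]
      _ ≤ (∑ i, ENNReal.ofReal (dist (f i).1 (f i).2 - 2 * δ)) * κ :=
          mul_le_mul_left (ofReal_sum_le' _ _) _
      _ = ∑ i, ENNReal.ofReal (dist (f i).1 (f i).2 - 2 * δ) * κ := by
          rw [Finset.sum_mul]
      _ ≤ ∑ i, ∫⁻ p, edist p.1 p.2 ∂(s i) := Finset.sum_le_sum fun i _ => hlow i
      _ = ∫⁻ p, edist p.1 p.2 ∂σ := hCσ.symm
      _ ≤ ∫⁻ p, edist p.1 p.2 ∂τ := hsum_le
      _ = ∑ i, ∫⁻ p, edist p.1 p.2 ∂(t i) := hCτ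
      _ ≤ ∑ i, ENNReal.ofReal (dist (f i).1 (f (e i)).2 + 2 * δ) * κ :=
          Finset.sum_le_sum fun i _ => hup i
      _ = (∑ i, ENNReal.ofReal (dist (f i).1 (f (e i)).2 + 2 * δ)) * κ := by
          rw [Finset.sum_mul]
      _ = ENNReal.ofReal (∑ i, (dist (f i).1 (f (e i)).2 + 2 * δ)) * κ := by
          rw [ENNReal.ofReal_sum_of_nonneg fun i _ => by positivity]
      _ = ENNReal.ofReal (Bs + (n : ℝ) * (2 * δ)) * κ := by
          rw [Finset.sum_add_distrib, Finset.sum_const, Finset.card_univ, Fintype.card_fin,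
            nsmul_eq_mul, ← hBs]
  have hBsnonneg : (0 : ℝ) ≤ Bs := Finset.sum_nonneg fun i _ => dist_nonneg
  have hreal : A - (n : ℝ) * (2 * δ) ≤ Bs + (n : ℝ) * (2 * δ) := by
    have h1 : ENNReal.ofReal (A - (n : ℝ) * (2 * δ))
        ≤ ENNReal.ofReal (Bs + (n : ℝ) * (2 * δ)) :=
      (ENNReal.mul_le_mul_iff_left hκ0 hκtop).mp hfinal
    rw [ENNReal.ofReal_le_ofReal_iff (by positivity)] at h1
    exact h1
  have hnδ : (n : ℝ) * δ = (A - Bs) / 8 := by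
    rw [hδdef]
    field_simp
  linarith


end CyclicMono

end KantAux

/-- Existence of a Kantorovich potential for the distance cost: if `π` is an optimal coupling
between `μ` and `ν` for the cost `c = d` with finite optimal cost, there is a `μ`-measurable
`1`-Lipschitz map `u` with `u x - u y = d x y` on the support of `π` and `u x - u y ≤ d x y`
everywhere. -/
theorem exists_kantorovich_potential
    {X : Type*} [MetricSpace X] [PolishSpace X] [MeasurableSpace X] [BorelSpace X]
    (μ ν : Measure X) [IsProbabilityMeasure μ] [IsProbabilityMeasure ν]
    (π : Measure (X × X))
    (hπ₁ : Measure.map Prod.fst π = μ) (hπ₂ : Measure.map Prod.snd π = ν)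
    (hopt : ∀ π' : Measure (X × X), Measure.map Prod.fst π' = μ →
      Measure.map Prod.snd π' = ν → ∫⁻ p, edist p.1 p.2 ∂π ≤ ∫⁻ p, edist p.1 p.2 ∂π')
    (hfin : ∫⁻ p, edist p.1 p.2 ∂π ≠ ⊤) :
    ∃ u : X → ℝ, AEMeasurable u μ ∧ LipschitzWith 1 u ∧
      (∀ p ∈ msupport π, u p.1 - u p.2 = dist p.1 p.2) ∧
      ∀ x y : X, u x - u y ≤ dist x y := by
  classical
  by_cases hS : (msupport π).Nonempty
  · obtain ⟨p₀, hp₀⟩ := hS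
    have hcyc : ∀ l : List (X × X), (∀ p ∈ l, p ∈ msupport π) →
        0 ≤ KantAux.chainVal p₀ p₀.1 l := by
      intro l hl
      have hmemb : ∀ i : Fin (l.length + 1),
          (p₀ :: l).getD (i : ℕ) p₀ ∈ msupport π := by
        intro i
        have hi : (i : ℕ) < (p₀ :: l).length := by
          rw [List.length_cons]; exact i.isLt
        rw [show (p₀ :: l).getD (i : ℕ) p₀ = (p₀ :: l).get ⟨(i : ℕ), hi⟩ from List.getD_eq_get (i := ⟨(i : ℕ), hi⟩) ..]
        have hmem : (p₀ :: l).get ⟨(i : ℕ), hi⟩ ∈ p₀ :: l := List.get_mem _ _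
        rcases List.mem_cons.mp hmem with h | h
        · rw [h]; exact hp₀
        · exact hl _ h
      have hmono := KantAux.cyclic_mono μ ν π hπ₁ hπ₂ hopt hfin (l.length + 1)
        (fun i : Fin (l.length + 1) => (p₀ :: l).getD (i : ℕ) p₀) (Equiv.addRight 1) hmemb
      rw [KantAux.bridge, sub_nonneg]
      have hL : ∑ i : Fin (l.length + 1),
          dist ((p₀ :: l).getD (i : ℕ) p₀).1 ((p₀ :: l).getD (i : ℕ) p₀).2
          = ∑ i ∈ Finset.range (l.length + 1),
              dist ((p₀ :: l).getD i p₀).1 ((p₀ :: l).getD i p₀).2 :=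
        Fin.sum_univ_eq_sum_range
          (fun k => dist ((p₀ :: l).getD k p₀).1 ((p₀ :: l).getD k p₀).2) (l.length + 1)
      have hR : ∑ i : Fin (l.length + 1),
          dist ((p₀ :: l).getD (i : ℕ) p₀).1
            ((p₀ :: l).getD (((Equiv.addRight 1 : Equiv.Perm (Fin (l.length + 1))) i : Fin (l.length + 1)) : ℕ) p₀).2
          = ∑ i ∈ Finset.range (l.length + 1),
              dist ((p₀ :: l).getD i p₀).1
                ((p₀ :: l).getD ((i + 1) % (l.length + 1)) p₀).2 := by
        rw [← Fin.sum_univ_eq_sum_range (fun k => dist ((p₀ :: l).getD k p₀).1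
              ((p₀ :: l).getD ((k + 1) % (l.length + 1)) p₀).2) (l.length + 1)]
        refine Finset.sum_congr rfl fun i _ => ?_
        have hval : (((Equiv.addRight 1 : Equiv.Perm (Fin (l.length + 1))) i :
            Fin (l.length + 1)) : ℕ) = ((i : ℕ) + 1) % (l.length + 1) := by
          simp only [Equiv.coe_addRight, Fin.add_def, Fin.val_one']
          exact Nat.add_mod_mod _ _ _
        rw [hval]
      rw [← hL, ← hR]
      exact hmono
    obtain ⟨u, hlip, heq, hle⟩ := KantAux.rockafellar (msupport π) p₀ hcyc
    exact ⟨u, hlip.continuous.measurable.aemeasurable, hlip, heq, hle⟩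
  · refine ⟨fun _ => 0, aemeasurable_const, ?_, ?_, ?_⟩
    · exact (LipschitzWith.const (0 : ℝ)).weaken zero_le_one
    · intro p hp
      exact absurd ⟨p, hp⟩ hS
    · intro x y
      simpa using dist_nonneg
end

section
/- Let ρ₀, ρ₁ be Borel probability measures on H with W₁(ρ₀,ρ₁) < ∞, and for each ε > 0 let Π_ε ∈ C(ρ₀,ρ₁) minimize Π ↦ ∫(|x−y| + ε α(x−y)) dΠ over C(ρ₀,ρ₁). If Π is a weak limit point of (Π_ε) as ε → 0, then Π ∈ O₁(ρ₀,ρ₁), i.e. ∫|x−y| dΠ ≤ ∫|x−y| dΠ₀ for every Π₀ ∈ C(ρ₀,ρ₁). -/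
open MeasureTheory ProbabilityTheory Filter Metric Set
open scoped ENNReal NNReal

variable {H : Type*} [NormedAddCommGroup H] [InnerProductSpace ℝ H] [CompleteSpace H]
  [TopologicalSpace.SeparableSpace H] [MeasurableSpace H] [BorelSpace H]


section AuxLemmas

open BoundedContinuousFunction in
private lemma marginal_eq_of_bcf {X Y : Type*} [MeasurableSpace X] [TopologicalSpace X]
    [OpensMeasurableSpace X] [MeasurableSpace Y] [PseudoMetricSpace Y] [BorelSpace Y]
    (μ : Measure X) [IsProbabilityMeasure μ] (ρ : Measure Y) [IsFiniteMeasure ρ]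
    (φ : X → Y) (hφ : Continuous φ)
    (h : ∀ f : BoundedContinuousFunction Y ℝ, ∫ x, f (φ x) ∂μ = ∫ y, f y ∂ρ) :
    Measure.map φ μ = ρ := by
  haveI := MeasureTheory.Measure.isProbabilityMeasure_map (μ := μ) hφ.measurable.aemeasurable
  apply MeasureTheory.ext_of_forall_lintegral_eq_of_IsFiniteMeasure
  intro f
  have key : ∫ y, (f y : ℝ) ∂(Measure.map φ μ) = ∫ y, (f y : ℝ) ∂ρ := by
    rw [integral_map (f := fun y => (f y : ℝ)) hφ.measurable.aemeasurable
      (Continuous.aestronglyMeasurable (by continuity))]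
    exact h (BoundedContinuousFunction.comp ((↑) : ℝ≥0 → ℝ) isometry_subtype_coe.lipschitz f)
  have h1 := BoundedContinuousFunction.lintegral_lt_top_of_nnreal (Measure.map φ μ) f
  have h2 := BoundedContinuousFunction.lintegral_lt_top_of_nnreal ρ f
  rw [← ENNReal.toReal_eq_toReal_iff' h1.ne h2.ne,
    BoundedContinuousFunction.toReal_lintegral_coe_eq_integral,
    BoundedContinuousFunction.toReal_lintegral_coe_eq_integral]
  exact key

private lemma coupling_isProbability {H : Type*} [NormedAddCommGroup H]
    [InnerProductSpace ℝ H] [MeasurableSpace H] [BorelSpace H]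
    {ρ₀ ρ₁ : Measure H} [IsProbabilityMeasure ρ₀] {π' : Measure (H × H)}
    (hc : π' ∈ Coupling ρ₀ ρ₁) : IsProbabilityMeasure π' := by
  constructor
  have h1 : (Measure.map Prod.fst π') Set.univ = 1 := by rw [hc.1]; exact measure_univ
  rwa [Measure.map_apply measurable_fst MeasurableSet.univ, Set.preimage_univ] at h1

private lemma alphaCost_nonneg {H : Type*} [NormedAddCommGroup H] [InnerProductSpace ℝ H]
    (z : H) : 0 ≤ alphaCost z := Real.sqrt_nonneg _

private lemma alphaCost_le {H : Type*} [NormedAddCommGroup H] [InnerProductSpace ℝ H]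
    (z : H) : alphaCost z ≤ 1 + ‖z‖ := by
  have hz : (0:ℝ) ≤ ‖z‖ := norm_nonneg z
  rw [alphaCost, show (1:ℝ) + ‖z‖ = Real.sqrt ((1 + ‖z‖)^2) from
    (Real.sqrt_sq (by linarith)).symm]
  apply Real.sqrt_le_sqrt
  nlinarith

/-- The truncated distance cost as a bounded continuous function. -/
private noncomputable def truncCost {H : Type*} [NormedAddCommGroup H]
    [InnerProductSpace ℝ H] (M : ℕ) : BoundedContinuousFunction (H × H) ℝ :=
  BoundedContinuousFunction.mkOfBound
    ⟨fun p => min ‖p.1 - p.2‖ (M : ℝ),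
      ((continuous_fst.sub continuous_snd).norm.min continuous_const)⟩
    (M : ℝ)
    (by
      intro x y
      have h1 : (0:ℝ) ≤ min ‖x.1 - x.2‖ (M : ℝ) ∨ True := Or.inr trivial
      simp only [ContinuousMap.coe_mk, Real.dist_eq, abs_sub_le_iff]
      constructor
      · have := le_min (norm_nonneg (y.1 - y.2)) (Nat.cast_nonneg (α := ℝ) M)
        have := min_le_right ‖x.1 - x.2‖ (M : ℝ)
        linarith
      · have := le_min (norm_nonneg (x.1 - x.2)) (Nat.cast_nonneg (α := ℝ) M)
        have := min_le_right ‖y.1 - y.2‖ (M : ℝ)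
        linarith)

private lemma truncCost_apply {H : Type*} [NormedAddCommGroup H]
    [InnerProductSpace ℝ H] (M : ℕ) (p : H × H) :
    truncCost M p = min ‖p.1 - p.2‖ (M : ℝ) := rfl

end AuxLemmas

/-- A weak limit point of minimizers of the perturbed problems `(P_ε)` as `ε → 0` belongs to
`O₁(ρ₀,ρ₁)`. -/
theorem weak_limit_in_O1
    (hinf : ¬ FiniteDimensional ℝ H)
    (ρ₀ ρ₁ : Measure H) [IsProbabilityMeasure ρ₀] [IsProbabilityMeasure ρ₁]
    (hW : W1 ρ₀ ρ₁ ≠ ⊤)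
    (πe : ℝ → Measure (H × H))
    (hcpl : ∀ ε > (0 : ℝ), πe ε ∈ Coupling ρ₀ ρ₁)
    (hopt : ∀ ε > (0 : ℝ), ∀ π' ∈ Coupling ρ₀ ρ₁, costEps ε (πe ε) ≤ costEps ε π')
    (π : Measure (H × H)) (ε : ℕ → ℝ) (hεpos : ∀ n, 0 < ε n)
    (hε0 : Tendsto ε atTop (nhds 0))
    (hlim : WeakLimit (fun n => πe (ε n)) π) :
    π ∈ O1 ρ₀ ρ₁ := by
  -- the approximating couplings are probability measures
  have hprob : ∀ n, IsProbabilityMeasure (πe (ε n)) :=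
    fun n => coupling_isProbability (hcpl _ (hεpos n))
  -- π is a probability measure
  have hπ1 : π Set.univ = 1 := by
    have h1 := hlim (BoundedContinuousFunction.const (H × H) (1 : ℝ))
    simp only [BoundedContinuousFunction.const_apply'] at h1
    have h2 : (fun n => ∫ _, (1 : ℝ) ∂(πe (ε n))) = fun _ => (1 : ℝ) := by
      funext n; haveI := hprob n; simp
    rw [h2] at h1
    have h3 : ∫ _, (1 : ℝ) ∂π = 1 := (tendsto_nhds_unique tendsto_const_nhds h1).symm
    rw [integral_const, smul_eq_mul, mul_one] at h3
    exact (ENNReal.toReal_eq_one_iff _).mp h3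
  haveI : IsProbabilityMeasure π := ⟨hπ1⟩
  -- π is a coupling
  have hfst : Measure.map Prod.fst π = ρ₀ := by
    apply marginal_eq_of_bcf π ρ₀ _ continuous_fst
    intro f
    have h1 := hlim (f.compContinuous (ContinuousMap.fst))
    simp only [BoundedContinuousFunction.compContinuous_apply, ContinuousMap.fst_apply] at h1
    have h2 : (fun n => ∫ p : H × H, f p.1 ∂(πe (ε n))) = fun _ => ∫ y, f y ∂ρ₀ := by
      funext n
      rw [← (hcpl _ (hεpos n)).1,
        integral_map measurable_fst.aemeasurable f.continuous.aestronglyMeasurable]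
    rw [h2] at h1
    exact tendsto_nhds_unique h1 tendsto_const_nhds
  have hsnd : Measure.map Prod.snd π = ρ₁ := by
    apply marginal_eq_of_bcf π ρ₁ _ continuous_snd
    intro f
    have h1 := hlim (f.compContinuous (ContinuousMap.snd))
    simp only [BoundedContinuousFunction.compContinuous_apply, ContinuousMap.snd_apply] at h1
    have h2 : (fun n => ∫ p : H × H, f p.2 ∂(πe (ε n))) = fun _ => ∫ y, f y ∂ρ₁ := by
      funext n
      rw [← (hcpl _ (hεpos n)).2,
        integral_map measurable_snd.aemeasurable f.continuous.aestronglyMeasurable]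
    rw [h2] at h1
    exact tendsto_nhds_unique h1 tendsto_const_nhds
  refine ⟨⟨hfst, hsnd⟩, ?_⟩
  -- optimality
  intro π' hπ'
  by_cases hc' : cost1 π' = ⊤
  · rw [hc']; exact le_top
  haveI := coupling_isProbability hπ'
  set c' := cost1 π' with hc'def
  have hmeas1 : Measurable fun p : H × H => ENNReal.ofReal ‖p.1 - p.2‖ :=
    ((continuous_fst.sub continuous_snd).norm.measurable).ennreal_ofReal
  -- cost2 π' ≤ 1 + c'
  have hcost2 : cost2 π' ≤ 1 + c' := by
    calc cost2 π' ≤ ∫⁻ p : H × H, (1 + ENNReal.ofReal ‖p.1 - p.2‖) ∂π' := by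
          apply lintegral_mono
          intro p
          calc ENNReal.ofReal (alphaCost (p.1 - p.2))
              ≤ ENNReal.ofReal (1 + ‖p.1 - p.2‖) :=
                ENNReal.ofReal_le_ofReal (alphaCost_le _)
            _ ≤ ENNReal.ofReal 1 + ENNReal.ofReal ‖p.1 - p.2‖ := ENNReal.ofReal_add_le
            _ = 1 + ENNReal.ofReal ‖p.1 - p.2‖ := by rw [ENNReal.ofReal_one]
      _ = 1 + c' := by
          rw [lintegral_add_left measurable_const]
          simp [hc'def, cost1]
  -- the key bound on cost1 of the approximants
  have key : ∀ n, cost1 (πe (ε n)) ≤ c' + ENNReal.ofReal (ε n) * (1 + c') := by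
    intro n
    have e1 : cost1 (πe (ε n)) ≤ costEps (ε n) (πe (ε n)) := by
      apply lintegral_mono
      intro p
      apply ENNReal.ofReal_le_ofReal
      have := alphaCost_nonneg (p.1 - p.2)
      nlinarith [(hεpos n).le]
    have e2 := hopt _ (hεpos n) π' hπ'
    have e3 : costEps (ε n) π' ≤ c' + ENNReal.ofReal (ε n) * cost2 π' := by
      calc costEps (ε n) π'
          ≤ ∫⁻ p : H × H, (ENNReal.ofReal ‖p.1 - p.2‖
              + ENNReal.ofReal (ε n * alphaCost (p.1 - p.2))) ∂π' :=
            lintegral_mono fun p => ENNReal.ofReal_add_le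
        _ = c' + ∫⁻ p : H × H, ENNReal.ofReal (ε n * alphaCost (p.1 - p.2)) ∂π' :=
            lintegral_add_left hmeas1 _
        _ = c' + ENNReal.ofReal (ε n) * cost2 π' := by
            congr 1
            simp_rw [ENNReal.ofReal_mul (hεpos n).le]
            rw [lintegral_const_mul' _ _ ENNReal.ofReal_ne_top]
            rfl
    calc cost1 (πe (ε n)) ≤ costEps (ε n) π' := e1.trans e2
      _ ≤ c' + ENNReal.ofReal (ε n) * cost2 π' := e3
      _ ≤ c' + ENNReal.ofReal (ε n) * (1 + c') := by gcongr
  -- real-valued bound for truncated costs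
  have hRfin : ∀ n, c' + ENNReal.ofReal (ε n) * (1 + c') ≠ ⊤ := by
    intro n
    apply ENNReal.add_ne_top.mpr
    exact ⟨hc', ENNReal.mul_ne_top ENNReal.ofReal_ne_top
      (ENNReal.add_ne_top.mpr ⟨ENNReal.one_ne_top, hc'⟩)⟩
  have hbnd : ∀ (M : ℕ) (n : ℕ),
      ∫ p, truncCost M p ∂(πe (ε n)) ≤ c'.toReal + ε n * (1 + c'.toReal) := by
    intro M n
    haveI := hprob n
    have hnonneg : 0 ≤ᵐ[πe (ε n)] fun p : H × H => truncCost M p :=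
      Eventually.of_forall fun p => le_min (norm_nonneg _) (Nat.cast_nonneg M)
    have hgle : ∫⁻ p, ENNReal.ofReal (truncCost M p) ∂(πe (ε n))
        ≤ c' + ENNReal.ofReal (ε n) * (1 + c') := by
      refine le_trans (lintegral_mono fun p => ?_) (key n)
      exact ENNReal.ofReal_le_ofReal (min_le_left _ _)
    have htr := ENNReal.toReal_mono (hRfin n) hgle
    rw [integral_eq_lintegral_of_nonneg_ae hnonneg
      (truncCost M).continuous.aestronglyMeasurable]
    refine htr.trans_eq ?_
    rw [ENNReal.toReal_add hc' (ENNReal.mul_ne_top ENNReal.ofReal_ne_top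
        (ENNReal.add_ne_top.mpr ⟨ENNReal.one_ne_top, hc'⟩)),
      ENNReal.toReal_mul, ENNReal.toReal_ofReal (hεpos n).le,
      ENNReal.toReal_add ENNReal.one_ne_top hc', ENNReal.toReal_one]
  -- pass to the limit
  have hlimM : ∀ M : ℕ, ∫ p, truncCost M p ∂π ≤ c'.toReal := by
    intro M
    have h1 := hlim (truncCost M)
    have h2 : Tendsto (fun n => c'.toReal + ε n * (1 + c'.toReal)) atTop
        (nhds (c'.toReal + 0 * (1 + c'.toReal))) :=
      tendsto_const_nhds.add (hε0.mul tendsto_const_nhds)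
    have h3 := le_of_tendsto_of_tendsto' h1 h2 (hbnd M)
    simpa using h3
  have hlintM : ∀ M : ℕ, ∫⁻ p : H × H, ENNReal.ofReal (min ‖p.1 - p.2‖ (M : ℝ)) ∂π ≤ c' := by
    intro M
    have hint : Integrable (fun p : H × H => truncCost M p) π :=
      (truncCost M).integrable π
    have hnonneg : 0 ≤ᵐ[π] fun p : H × H => truncCost M p :=
      Eventually.of_forall fun p => le_min (norm_nonneg _) (Nat.cast_nonneg M)
    have heq : ∫⁻ p : H × H, ENNReal.ofReal (min ‖p.1 - p.2‖ (M : ℝ)) ∂π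
        = ENNReal.ofReal (∫ p, truncCost M p ∂π) :=
      (MeasureTheory.ofReal_integral_eq_lintegral_ofReal hint hnonneg).symm
    rw [heq]
    calc ENNReal.ofReal (∫ p, truncCost M p ∂π)
        ≤ ENNReal.ofReal c'.toReal := ENNReal.ofReal_le_ofReal (hlimM M)
      _ = c' := ENNReal.ofReal_toReal hc'
  -- monotone convergence
  have hmono : Monotone fun (M : ℕ) (p : H × H) => ENNReal.ofReal (min ‖p.1 - p.2‖ (M : ℝ)) := by
    intro M N hMN
    intro p
    exact ENNReal.ofReal_le_ofReal (min_le_min le_rfl (Nat.cast_le.mpr hMN))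
  have hmeasM : ∀ M : ℕ,
      Measurable fun p : H × H => ENNReal.ofReal (min ‖p.1 - p.2‖ (M : ℝ)) := fun M =>
    (((continuous_fst.sub continuous_snd).norm.min continuous_const).measurable).ennreal_ofReal
  have hMCT : cost1 π
      = ⨆ M : ℕ, ∫⁻ p : H × H, ENNReal.ofReal (min ‖p.1 - p.2‖ (M : ℝ)) ∂π := by
    rw [← lintegral_iSup hmeasM hmono]
    unfold cost1
    congr 1
    funext p
    apply le_antisymm
    · refine le_iSup_of_le ⌈‖p.1 - p.2‖⌉₊ ?_
      rw [min_eq_left (Nat.le_ceil _)]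
    · exact iSup_le fun M => ENNReal.ofReal_le_ofReal (min_le_left _ _)
  rw [hMCT]
  exact iSup_le hlintM
end

section
/- Let ρ₀, ρ₁ be Borel probability measures on H with W₁(ρ₀,ρ₁) < ∞, and for each ε > 0 let Π_ε ∈ C(ρ₀,ρ₁) minimize Π ↦ ∫(|x−y| + ε α(x−y)) dΠ over C(ρ₀,ρ₁). Then every weak limit point Π of (Π_ε) as ε → 0 belongs to O₂(ρ₀,ρ₁): Π is optimal for ∫|x−y|dΠ over C(ρ₀,ρ₁), and ∫α(x−y) dΠ ≤ ∫α(x−y) dΠ₀ for every Π₀ ∈ O₁(ρ₀,ρ₁). -/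
open MeasureTheory ProbabilityTheory Filter Metric Set
open scoped ENNReal NNReal

variable {H : Type*} [NormedAddCommGroup H] [InnerProductSpace ℝ H] [CompleteSpace H]
  [TopologicalSpace.SeparableSpace H] [MeasurableSpace H] [BorelSpace H]


section AuxLemmas

open Filter BoundedContinuousFunction

variable {H : Type*} [NormedAddCommGroup H] [InnerProductSpace ℝ H] [CompleteSpace H]
  [TopologicalSpace.SeparableSpace H] [MeasurableSpace H] [BorelSpace H]

lemma aux_alphaCost_nonneg (z : H) : 0 ≤ alphaCost z := Real.sqrt_nonneg _

lemma aux_alphaCost_le (z : H) : alphaCost z ≤ 1 + ‖z‖ := by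
  rw [alphaCost, show (1:ℝ) + ‖z‖ = Real.sqrt ((1 + ‖z‖) ^ 2) from
    (Real.sqrt_sq (by positivity)).symm]
  exact Real.sqrt_le_sqrt (by nlinarith [norm_nonneg z])

lemma aux_alphaCost_continuous : Continuous fun p : H × H => alphaCost (p.1 - p.2) := by
  unfold alphaCost
  exact Real.continuous_sqrt.comp (by fun_prop)

/-- A weak limit of measures integrates BCFs; lower semicontinuity for nonneg continuous `f`. -/
lemma aux_le_liminf {X : Type*} [MeasurableSpace X] [TopologicalSpace X] [OpensMeasurableSpace X]
    (μs : ℕ → Measure X) (μ : Measure X) [∀ n, IsProbabilityMeasure (μs n)] [IsFiniteMeasure μ]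
    (h : WeakLimit μs μ) {f : X → ℝ} (hf : Continuous f) (hf0 : ∀ x, 0 ≤ f x) :
    ∫⁻ x, ENNReal.ofReal (f x) ∂μ ≤
      atTop.liminf fun n => ∫⁻ x, ENNReal.ofReal (f x) ∂(μs n) := by
  set L := atTop.liminf fun n => ∫⁻ x, ENNReal.ofReal (f x) ∂(μs n) with hL
  have key : ∀ m : ℕ, ∫⁻ x, ENNReal.ofReal (min (f x) m) ∂μ ≤ L := by
    intro m
    set F : BoundedContinuousFunction X ℝ :=
      BoundedContinuousFunction.ofNormedAddCommGroup (fun x => min (f x) m)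
        (hf.min continuous_const) m (fun x => by
          rw [Real.norm_eq_abs, abs_of_nonneg (le_min (hf0 x) (Nat.cast_nonneg m))]
          exact min_le_right _ _) with hFdef
    have hFx : ∀ x, F x = min (f x) m := fun x => rfl
    have heq : ∀ (ν : Measure X) [IsFiniteMeasure ν],
        ENNReal.ofReal (∫ x, F x ∂ν) = ∫⁻ x, ENNReal.ofReal (min (f x) m) ∂ν := by
      intro ν _
      rw [MeasureTheory.ofReal_integral_eq_lintegral_ofReal (F.integrable ν)
        (Eventually.of_forall fun x => by
          rw [hFx]; exact le_min (hf0 x) (Nat.cast_nonneg m))]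
      exact lintegral_congr fun x => by rw [hFx]
    have h1 := (ENNReal.continuous_ofReal.tendsto _).comp (h F)
    have h2 : ∀ n, ENNReal.ofReal (∫ x, F x ∂(μs n)) ≤ ∫⁻ x, ENNReal.ofReal (f x) ∂(μs n) := by
      intro n
      rw [heq]
      exact lintegral_mono fun x => ENNReal.ofReal_le_ofReal (min_le_left _ _)
    calc ∫⁻ x, ENNReal.ofReal (min (f x) m) ∂μ
        = ENNReal.ofReal (∫ x, F x ∂μ) := (heq μ).symm
      _ = atTop.liminf (fun n => ENNReal.ofReal (∫ x, F x ∂(μs n))) := h1.liminf_eq.symm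
      _ ≤ L := liminf_le_liminf (Eventually.of_forall h2)
  have hpt : ∀ x : X, ⨆ m : ℕ, ENNReal.ofReal (min (f x) m) = ENNReal.ofReal (f x) := by
    intro x
    refine le_antisymm (iSup_le fun m => ENNReal.ofReal_le_ofReal (min_le_left _ _)) ?_
    refine le_iSup_of_le ⌈f x⌉₊ ?_
    rw [min_eq_left (Nat.le_ceil _)]
  calc ∫⁻ x, ENNReal.ofReal (f x) ∂μ
      = ∫⁻ x, ⨆ m : ℕ, ENNReal.ofReal (min (f x) m) ∂μ :=
        lintegral_congr fun x => (hpt x).symm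
    _ = ⨆ m : ℕ, ∫⁻ x, ENNReal.ofReal (min (f x) m) ∂μ := by
        refine lintegral_iSup (fun m => ?_) (fun a b hab x => ?_)
        · exact ENNReal.measurable_ofReal.comp (hf.min continuous_const).measurable
        · exact ENNReal.ofReal_le_ofReal (min_le_min le_rfl (Nat.cast_le.mpr hab))
    _ ≤ L := iSup_le key

lemma aux_prob_of_coupling (ρ₀ ρ₁ : Measure H) [IsProbabilityMeasure ρ₀]
    {σ : Measure (H × H)} (h : σ ∈ Coupling ρ₀ ρ₁) : IsProbabilityMeasure σ := by
  constructor
  have h2 : σ Set.univ = Measure.map Prod.fst σ Set.univ := by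
    rw [Measure.map_apply measurable_fst MeasurableSet.univ, Set.preimage_univ]
  rw [h2, h.1]
  exact measure_univ

lemma aux_ext_of_integral {ν₁ ν₂ : Measure H} [IsFiniteMeasure ν₁] [IsFiniteMeasure ν₂]
    (hint : ∀ f : BoundedContinuousFunction H ℝ, ∫ x, f x ∂ν₁ = ∫ x, f x ∂ν₂) : ν₁ = ν₂ := by
  apply MeasureTheory.ext_of_forall_lintegral_eq_of_IsFiniteMeasure
  intro g
  set gr : BoundedContinuousFunction H ℝ :=
    BoundedContinuousFunction.ofNormedAddCommGroup (fun x => (g x : ℝ))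
      (NNReal.continuous_coe.comp g.continuous) (nndist g 0) (fun x => by
        have := BoundedContinuousFunction.NNReal.upper_bound g x
        rw [Real.norm_eq_abs, abs_of_nonneg (g x).coe_nonneg]
        exact_mod_cast this) with hgrdef
  have hgr : ∀ x, gr x = (g x : ℝ) := fun x => rfl
  have hfin1 := BoundedContinuousFunction.lintegral_lt_top_of_nnreal ν₁ g
  have hfin2 := BoundedContinuousFunction.lintegral_lt_top_of_nnreal ν₂ g
  have htr : (∫⁻ x, (g x : ℝ≥0∞) ∂ν₁).toReal = (∫⁻ x, (g x : ℝ≥0∞) ∂ν₂).toReal := by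
    rw [BoundedContinuousFunction.toReal_lintegral_coe_eq_integral,
      BoundedContinuousFunction.toReal_lintegral_coe_eq_integral]
    simpa [hgr] using hint gr
  exact (ENNReal.toReal_eq_toReal_iff' hfin1.ne hfin2.ne).mp htr

lemma aux_costEps_split (ε : ℝ) (hε : 0 ≤ ε) (σ : Measure (H × H)) :
    costEps ε σ = cost1 σ + ENNReal.ofReal ε * cost2 σ := by
  unfold costEps cost1 cost2
  have m1 : Measurable fun p : H × H => ENNReal.ofReal (alphaCost (p.1 - p.2)) :=
    ENNReal.measurable_ofReal.comp aux_alphaCost_continuous.measurable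
  have m2 : Measurable fun p : H × H => ENNReal.ofReal ‖p.1 - p.2‖ :=
    ENNReal.measurable_ofReal.comp (by fun_prop :
      Continuous fun p : H × H => ‖p.1 - p.2‖).measurable
  calc ∫⁻ p, ENNReal.ofReal (‖p.1 - p.2‖ + ε * alphaCost (p.1 - p.2)) ∂σ
      = ∫⁻ p, (ENNReal.ofReal ‖p.1 - p.2‖
          + ENNReal.ofReal ε * ENNReal.ofReal (alphaCost (p.1 - p.2))) ∂σ := by
        refine lintegral_congr fun p => ?_
        rw [ENNReal.ofReal_add (norm_nonneg _) (mul_nonneg hε (aux_alphaCost_nonneg _)),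
          ENNReal.ofReal_mul hε]
    _ = _ := by rw [lintegral_add_left m2, lintegral_const_mul _ m1]

lemma aux_cost2_le (σ : Measure (H × H)) : cost2 σ ≤ σ Set.univ + cost1 σ := by
  unfold cost2 cost1
  calc ∫⁻ p, ENNReal.ofReal (alphaCost (p.1 - p.2)) ∂σ
      ≤ ∫⁻ p, 1 + ENNReal.ofReal ‖p.1 - p.2‖ ∂σ := by
        refine lintegral_mono fun p => ?_
        rw [← ENNReal.ofReal_one, ← ENNReal.ofReal_add zero_le_one (norm_nonneg _)]
        exact ENNReal.ofReal_le_ofReal (aux_alphaCost_le _)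
    _ = σ Set.univ + ∫⁻ p, ENNReal.ofReal ‖p.1 - p.2‖ ∂σ := by
        rw [lintegral_add_left measurable_const, lintegral_one]

lemma aux_cost1_le_costEps (ε : ℝ) (hε : 0 ≤ ε) (σ : Measure (H × H)) :
    cost1 σ ≤ costEps ε σ := by
  unfold cost1 costEps
  refine lintegral_mono fun p => ENNReal.ofReal_le_ofReal ?_
  nlinarith [aux_alphaCost_nonneg (p.1 - p.2 : H)]

end AuxLemmas

/-- A weak limit point of minimizers of the perturbed problems `(P_ε)` as `ε → 0` belongs to
`O₂(ρ₀,ρ₁)`. -/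
theorem weak_limit_in_O2
    (hinf : ¬ FiniteDimensional ℝ H)
    (ρ₀ ρ₁ : Measure H) [IsProbabilityMeasure ρ₀] [IsProbabilityMeasure ρ₁]
    (hW : W1 ρ₀ ρ₁ ≠ ⊤)
    (πe : ℝ → Measure (H × H))
    (hcpl : ∀ ε > (0 : ℝ), πe ε ∈ Coupling ρ₀ ρ₁)
    (hopt : ∀ ε > (0 : ℝ), ∀ π' ∈ Coupling ρ₀ ρ₁, costEps ε (πe ε) ≤ costEps ε π')
    (π : Measure (H × H)) (ε : ℕ → ℝ) (hεpos : ∀ n, 0 < ε n)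
    (hε0 : Tendsto ε atTop (nhds 0))
    (hlim : WeakLimit (fun n => πe (ε n)) π) :
    π ∈ O1 ρ₀ ρ₁ ∧ ∀ π' ∈ O1 ρ₀ ρ₁, cost2 π ≤ cost2 π' := by
  classical
  haveI hprob : ∀ n, IsProbabilityMeasure (πe (ε n)) :=
    fun n => aux_prob_of_coupling ρ₀ ρ₁ (hcpl _ (hεpos n))
  -- a coupling with finite cost exists
  obtain ⟨σ, hσc, hσfin⟩ : ∃ σ ∈ Coupling ρ₀ ρ₁, cost1 σ ≠ ⊤ := by
    by_contra hc
    push_neg at hc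
    exact hW (top_le_iff.mp (le_iInf₂ fun σ hσ => (hc σ hσ).ge))
  -- π is a probability measure
  have hπuniv : π Set.univ = 1 := by
    have h1 := hlim 1
    have hconst : ∀ ν : Measure (H × H), IsProbabilityMeasure ν →
        ∫ p, (1 : BoundedContinuousFunction (H × H) ℝ) p ∂ν = 1 := by
      intro ν hν
      simp
    have hval : ∫ p, (1 : BoundedContinuousFunction (H × H) ℝ) p ∂π = 1 := by
      have h2 : Tendsto (fun n : ℕ =>
          ∫ p, (1 : BoundedContinuousFunction (H × H) ℝ) p ∂(πe (ε n))) atTop (nhds 1) := by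
        have he : (fun n : ℕ =>
            ∫ p, (1 : BoundedContinuousFunction (H × H) ℝ) p ∂(πe (ε n))) = fun _ => (1 : ℝ) :=
          funext fun n => hconst _ (hprob n)
        rw [he]; exact tendsto_const_nhds
      exact tendsto_nhds_unique h1 h2
    simp only [BoundedContinuousFunction.coe_one, Pi.one_apply, integral_const, smul_eq_mul,
      mul_one] at hval
    rcases eq_or_ne (π Set.univ) ⊤ with htop | htop
    · rw [measureReal_def, htop] at hval; simp at hval
    · rw [← ENNReal.ofReal_toReal htop, ← measureReal_def, hval]; simp
  haveI hπprob : IsProbabilityMeasure π := ⟨hπuniv⟩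
  -- marginals of π
  have hπc : π ∈ Coupling ρ₀ ρ₁ := by
    constructor
    · haveI : IsFiniteMeasure (Measure.map Prod.fst π) :=
        Measure.isFiniteMeasure_map π Prod.fst
      refine aux_ext_of_integral fun f => ?_
      have hm : ∀ (ν : Measure (H × H)),
          ∫ p, (f.compContinuous ⟨Prod.fst, continuous_fst⟩) p ∂ν
            = ∫ x, f x ∂(Measure.map Prod.fst ν) := fun ν =>
        (integral_map measurable_fst.aemeasurable f.continuous.aestronglyMeasurable).symm
      have h1 := hlim (f.compContinuous ⟨Prod.fst, continuous_fst⟩)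
      have h1' : Tendsto (fun _ : ℕ => ∫ x, f x ∂ρ₀) atTop
          (nhds (∫ x, f x ∂(Measure.map Prod.fst π))) := by
        rw [← hm]
        refine h1.congr fun n => ?_
        rw [hm, (hcpl _ (hεpos n)).1]
      exact tendsto_nhds_unique h1' tendsto_const_nhds
    · haveI : IsFiniteMeasure (Measure.map Prod.snd π) :=
        Measure.isFiniteMeasure_map π Prod.snd
      refine aux_ext_of_integral fun f => ?_
      have hm : ∀ (ν : Measure (H × H)),
          ∫ p, (f.compContinuous ⟨Prod.snd, continuous_snd⟩) p ∂ν
            = ∫ x, f x ∂(Measure.map Prod.snd ν) := fun ν =>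
        (integral_map measurable_snd.aemeasurable f.continuous.aestronglyMeasurable).symm
      have h1 := hlim (f.compContinuous ⟨Prod.snd, continuous_snd⟩)
      have h1' : Tendsto (fun _ : ℕ => ∫ x, f x ∂ρ₁) atTop
          (nhds (∫ x, f x ∂(Measure.map Prod.snd π))) := by
        rw [← hm]
        refine h1.congr fun n => ?_
        rw [hm, (hcpl _ (hεpos n)).2]
      exact tendsto_nhds_unique h1' tendsto_const_nhds
  -- key optimality inequality split
  have hkey : ∀ π' ∈ Coupling ρ₀ ρ₁, ∀ n,
      cost1 (πe (ε n)) + ENNReal.ofReal (ε n) * cost2 (πe (ε n))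
        ≤ cost1 π' + ENNReal.ofReal (ε n) * cost2 π' := by
    intro π' hπ' n
    rw [← aux_costEps_split _ (hεpos n).le, ← aux_costEps_split _ (hεpos n).le]
    exact hopt _ (hεpos n) π' hπ'
  -- lower semicontinuity of cost1 and cost2 at π
  have hls1 : cost1 π ≤ atTop.liminf fun n => cost1 (πe (ε n)) :=
    aux_le_liminf _ π hlim (by fun_prop : Continuous fun p : H × H => ‖p.1 - p.2‖)
      (fun p => norm_nonneg _)
  have hls2 : cost2 π ≤ atTop.liminf fun n => cost2 (πe (ε n)) :=
    aux_le_liminf _ π hlim aux_alphaCost_continuous (fun p => aux_alphaCost_nonneg _)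
  -- part 1 : π ∈ O1
  have part1 : ∀ π' ∈ Coupling ρ₀ ρ₁, cost1 π ≤ cost1 π' := by
    intro π' hπ'
    rcases eq_or_ne (cost1 π') ⊤ with h | h
    · rw [h]; exact le_top
    haveI := aux_prob_of_coupling ρ₀ ρ₁ hπ'
    have h2 : cost2 π' ≠ ⊤ := by
      refine ne_top_of_le_ne_top ?_ (aux_cost2_le π')
      rw [measure_univ]
      exact ENNReal.add_ne_top.mpr ⟨ENNReal.one_ne_top, h⟩
    have hb : ∀ n, cost1 (πe (ε n)) ≤ cost1 π' + ENNReal.ofReal (ε n) * cost2 π' := by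
      intro n
      exact le_trans (le_add_right le_rfl) (hkey π' hπ' n)
    have htend : Tendsto (fun n => cost1 π' + ENNReal.ofReal (ε n) * cost2 π') atTop
        (nhds (cost1 π')) := by
      have h0 : Tendsto (fun n => ENNReal.ofReal (ε n)) atTop (nhds 0) := by
        have := (ENNReal.continuous_ofReal.tendsto 0).comp hε0
        simpa [Function.comp_def] using this
      have h3 : Tendsto (fun n => ENNReal.ofReal (ε n) * cost2 π') atTop (nhds 0) := by
        have := ENNReal.Tendsto.mul_const h0 (Or.inr h2)
        simpa using this
      simpa using tendsto_const_nhds.add h3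
    calc cost1 π ≤ atTop.liminf fun n => cost1 (πe (ε n)) := hls1
      _ ≤ atTop.liminf fun n => cost1 π' + ENNReal.ofReal (ε n) * cost2 π' :=
          liminf_le_liminf (Eventually.of_forall hb)
      _ = cost1 π' := htend.liminf_eq
  refine ⟨⟨hπc, part1⟩, ?_⟩
  -- part 2
  intro π' hπ'
  have hπ'c := hπ'.1
  haveI := aux_prob_of_coupling ρ₀ ρ₁ hπ'c
  have h1fin : cost1 π' ≠ ⊤ := ne_top_of_le_ne_top hσfin (hπ'.2 σ hσc)
  have h2fin : cost2 π' ≠ ⊤ := by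
    refine ne_top_of_le_ne_top ?_ (aux_cost2_le π')
    rw [measure_univ]
    exact ENNReal.add_ne_top.mpr ⟨ENNReal.one_ne_top, h1fin⟩
  have hn : ∀ n, cost2 (πe (ε n)) ≤ cost2 π' := by
    intro n
    have hrhs : cost1 π' + ENNReal.ofReal (ε n) * cost2 π' ≠ ⊤ :=
      ENNReal.add_ne_top.mpr ⟨h1fin, ENNReal.mul_ne_top ENNReal.ofReal_ne_top h2fin⟩
    have hfin : cost1 (πe (ε n)) ≠ ⊤ :=
      ne_top_of_le_ne_top hrhs (le_trans (le_add_right le_rfl) (hkey π' hπ'c n))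
    have step : cost1 (πe (ε n)) + ENNReal.ofReal (ε n) * cost2 (πe (ε n))
        ≤ cost1 (πe (ε n)) + ENNReal.ofReal (ε n) * cost2 π' :=
      (hkey π' hπ'c n).trans (add_le_add (hπ'.2 _ (hcpl _ (hεpos n))) le_rfl)
    have hmul := ENNReal.le_of_add_le_add_left hfin step
    exact (ENNReal.mul_le_mul_iff_right (ENNReal.ofReal_pos.mpr (hεpos n)).ne'
      ENNReal.ofReal_ne_top).mp hmul
  calc cost2 π ≤ atTop.liminf fun n => cost2 (πe (ε n)) := hls2
    _ ≤ atTop.liminf fun _ => cost2 π' := liminf_le_liminf (Eventually.of_forall hn)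
    _ = cost2 π' := liminf_const _
end

section
/- Let H be a real Hilbert space and α(z) := √(1+|z|²), which is convex and differentiable on H with gradient ∇α. If x, x', y, y' ∈ H satisfy α(y−x) + α(y'−x') ≤ α(y'−x) + α(y−x'), then ⟨∇α(y−x') − ∇α(y'−x), x−x'⟩ ≥ 0. -/
open MeasureTheory ProbabilityTheory Filter Metric Set
open scoped ENNReal NNReal

lemma alphaCost_grad_ineq {H : Type*} [NormedAddCommGroup H] [InnerProductSpace ℝ H]
    (a b : H) :
    alphaCost a + (inner ℝ (gradAlpha a) (b - a) : ℝ) ≤ alphaCost b := by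
  have hs2 : (0:ℝ) < 1 + ‖a‖ ^ 2 := by positivity
  have ht2 : (0:ℝ) < 1 + ‖b‖ ^ 2 := by positivity
  set s := Real.sqrt (1 + ‖a‖ ^ 2) with hs
  set t := Real.sqrt (1 + ‖b‖ ^ 2) with ht
  have hspos : 0 < s := Real.sqrt_pos.mpr hs2
  have htpos : 0 < t := Real.sqrt_pos.mpr ht2
  have hssq : s ^ 2 = 1 + ‖a‖ ^ 2 := Real.sq_sqrt hs2.le
  have htsq : t ^ 2 = 1 + ‖b‖ ^ 2 := Real.sq_sqrt ht2.le
  have hcs : (inner ℝ a b : ℝ) ≤ ‖a‖ * ‖b‖ := real_inner_le_norm a b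
  have hkey : 1 + (inner ℝ a b : ℝ) ≤ s * t := by
    rcases le_or_gt (1 + (inner ℝ a b : ℝ)) 0 with h0 | h0
    · exact h0.trans (by positivity)
    · nlinarith [sq_nonneg (s - t), sq_nonneg (‖a‖ - ‖b‖), sq_nonneg (s*t),
        mul_pos hspos htpos]
  have hinner : (inner ℝ (gradAlpha a) (b - a) : ℝ) = s⁻¹ * ((inner ℝ a b : ℝ) - ‖a‖ ^ 2) := by
    simp [gradAlpha, real_inner_smul_left, inner_sub_right, real_inner_self_eq_norm_sq, ← hs,
      mul_sub]
  have : alphaCost a = s := rfl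
  rw [this, hinner]
  have : alphaCost b = t := rfl
  rw [this]
  have hexp : s + s⁻¹ * ((inner ℝ a b : ℝ) - ‖a‖ ^ 2) = s⁻¹ * (1 + (inner ℝ a b : ℝ)) := by
    field_simp
    nlinarith [hssq]
  rw [hexp]
  calc s⁻¹ * (1 + (inner ℝ a b : ℝ)) ≤ s⁻¹ * (s * t) := by
        exact mul_le_mul_of_nonneg_left hkey (inv_nonneg.mpr hspos.le)
    _ = t := by field_simp

/-- If `α(y-x) + α(y'-x') ≤ α(y'-x) + α(y-x')` (with `α(z) = √(1+|z|²)` and gradient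
`∇α(z) = z/√(1+|z|²)`), then `⟪∇α(y-x') - ∇α(y'-x), x-x'⟫ ≥ 0`. -/
theorem gradAlpha_monotone {H : Type*} [NormedAddCommGroup H] [InnerProductSpace ℝ H]
    (x x' y y' : H)
    (h : alphaCost (y - x) + alphaCost (y' - x')
      ≤ alphaCost (y' - x) + alphaCost (y - x')) :
    0 ≤ (inner ℝ (gradAlpha (y - x') - gradAlpha (y' - x)) (x - x') : ℝ) := by
  have h1 := alphaCost_grad_ineq (y - x') (y - x)
  have h2 := alphaCost_grad_ineq (y' - x) (y' - x')
  have e1 : y - x - (y - x') = x' - x := by abel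
  have e2 : y' - x' - (y' - x) = x - x' := by abel
  rw [e1] at h1
  rw [e2] at h2
  have hsub : (x' - x : H) = -(x - x') := by abel
  rw [hsub, inner_neg_right] at h1
  rw [inner_sub_left]
  linarith
end
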